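/- arXiv:1701.04651 — 3 statements merged into one kernel-verified Lean document; each statement's English description precedes it below -/
import Mathlib

section
/- Let p and q be interpolating profiles such that p - q is Lebesgue integrable on ℝ. Then ∫_ℝ (p(x) - q(x)) dx = ∫_ℝ (p̄(x) - q̄(x)) dx, where p̄, q̄ are the increasing rearrangements of p, q. -/
open MeasureTheory Filter Set
open scoped ENNReal

noncomputable section

/-- Convolution `(p ⊗ w)(x) = ∫ p(y) w(x-y) dy`. -/
def convw (p w : ℝ → ℝ) (x : ℝ) : ℝ := ∫ y, p y * w (x - y)

/-- `w` is a window: bounded, nonnegative, even, integrable, normalized. -/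
structure IsWindow (w : ℝ → ℝ) : Prop where
  nonneg : ∀ x, 0 ≤ w x
  even : ∀ x, w (-x) = w x
  bounded : ∃ M, ∀ x, w x ≤ M
  integrable : Integrable w
  normalized : (∫ x, w x) = 1

/-- Generalized inverse `h⁻¹(u) = inf {v ∈ [0,1] : h v > u}`. -/
def geninv (h : ℝ → ℝ) (u : ℝ) : ℝ := sInf {v | v ∈ Icc (0:ℝ) 1 ∧ u < h v}

/-- `h` is an update function: nondecreasing from [0,1] to [0,1] with h 0 = 0, h 1 = 1. -/
def IsUpdate (h : ℝ → ℝ) : Prop :=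
  MonotoneOn h (Icc (0:ℝ) 1) ∧ (∀ v ∈ Icc (0:ℝ) 1, h v ∈ Icc (0:ℝ) 1) ∧ h 0 = 0 ∧ h 1 = 1

/-- The potential function φ(u,v). -/
def pot (hf hg : ℝ → ℝ) (u v : ℝ) : ℝ :=
  (∫ u' in (0:ℝ)..u, geninv hg u') + (∫ v' in (0:ℝ)..v, geninv hf v') - u * v

/-- The positive gap condition. -/
def PGC (hf hg : ℝ → ℝ) : Prop :=
  pot hf hg 1 1 = 0 ∧ ∀ u ∈ Icc (0:ℝ) 1, ∀ v ∈ Icc (0:ℝ) 1, 0 ≤ pot hf hg u v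

/-- The strictly positive gap condition. -/
def SPGC (hf hg : ℝ → ℝ) : Prop :=
  pot hf hg 1 1 = 0 ∧ ∀ u ∈ Icc (0:ℝ) 1, ∀ v ∈ Icc (0:ℝ) 1,
    (u, v) ≠ ((0:ℝ), (0:ℝ)) → (u, v) ≠ ((1:ℝ), (1:ℝ)) → 0 < pot hf hg u v

/-- Interpolating profile: takes values in [0,1], tends to 0 at -∞ and to 1 at +∞. -/
def IsProfile (p : ℝ → ℝ) : Prop :=
  (∀ x, p x ∈ Icc (0:ℝ) 1) ∧ Tendsto p atBot (nhds 0) ∧ Tendsto p atTop (nhds 1)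

/-- `H(t) = ∫_0^t h⁻¹`. -/
def Hfun (h : ℝ → ℝ) (t : ℝ) : ℝ := ∫ v in (0:ℝ)..t, geninv h v

/-- The potential functional `W(f,g)`, valued in [0,∞]. -/
def Wfun (w hf hg f g : ℝ → ℝ) : ℝ≥0∞ :=
  ∫⁻ x, ENNReal.ofReal
    (Hfun hg (g x) + convw (fun y => Hfun hf (f y)) w x - convw f w x * g x)

/-- Saturation of a profile `f` at level `K`. -/
def cut (f : ℝ → ℝ) (K : ℝ) (x : ℝ) : ℝ :=
  (if |x| ≤ K then f x else 0) + (if K < x then 1 else 0)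

/-- Left endpoint of the maximal half-line contained in the level set `{x : p x > t}`. -/
def aT (p : ℝ → ℝ) (t : ℝ) : ℝ := sInf {a : ℝ | Ioi a ⊆ {x | t < p x}}

/-- Increasing rearrangement of an interpolating profile. -/
def rearr (p : ℝ → ℝ) (x : ℝ) : ℝ :=
  (volume {t : ℝ | t ∈ Ioo (0:ℝ) 1 ∧
    aT p t - (volume ({x | t < p x} \ Ioi (aT p t))).toReal < x}).toReal

/-- `Ω(x) = ∫_{-∞}^x w`. -/
def Om (w : ℝ → ℝ) (x : ℝ) : ℝ := ∫ z in Iic x, w z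

/-- The kernel `V(x) = ∫_{-∞}^x Ω`. -/
def Vker (w : ℝ → ℝ) (x : ℝ) : ℝ := ∫ z in Iic x, Om w z

/-- `κ(x) = V(x) - x Ω(x)`. -/
def kap (w : ℝ → ℝ) (x : ℝ) : ℝ := Vker w x - x * Om w x

/-- Right-continuous generalized inverse of a profile. -/
def rinv (p : ℝ → ℝ) (u : ℝ) : ℝ := sInf {x | u < p x}

/-- Displacement interpolant of two nondecreasing interpolating profiles. -/
def dispInterp (p0 p1 : ℝ → ℝ) (l x : ℝ) : ℝ :=
  sInf {u | u ∈ Ioo (0:ℝ) 1 ∧ x < (1 - l) * rinv p0 u + l * rinv p1 u}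

/-- A profile saturated off of the interval [-K,K]. -/
def Saturated (f : ℝ → ℝ) (K : ℝ) : Prop :=
  (∀ x, x < -K → f x = 0) ∧ (∀ x, K < x → f x = 1)

/-- Consistent fixed point. -/
def IsCFP (w hf hg f g : ℝ → ℝ) : Prop :=
  ∀ x, f x ∈ Icc (Function.leftLim hf (convw g w x)) (Function.rightLim hf (convw g w x)) ∧
       g x ∈ Icc (Function.leftLim hg (convw f w x)) (Function.rightLim hg (convw f w x))

/-- Interval support condition with parameter `W ∈ (0,∞]`. -/
def IntervalSupport (w : ℝ → ℝ) (W : ℝ≥0∞) : Prop :=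
  ∀ x : ℝ, (ENNReal.ofReal |x| < W → 0 < w x) ∧ (W < ENNReal.ofReal |x| → w x = 0)

/-- The functional `L(f,g)`. -/
def Lfun (hf hg f g : ℝ → ℝ) : ℝ :=
  ∫ x, ((∫ v in (0:ℝ)..f x, geninv hf v) - ∫ u in (0:ℝ)..g x, (1 - geninv hg u))

namespace Stmt4Aux


abbrev Sset (f : ℝ → ℝ) (t : ℝ) : Set ℝ := {x | t < f x}

def bfun (f : ℝ → ℝ) (t : ℝ) : ℝ := aT f t - (volume (Sset f t \ Ioi (aT f t))).toReal

/-- `N, M` is a good pair for `f` at level `t`. -/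
def GP (f : ℝ → ℝ) (t N M : ℝ) : Prop :=
  volume (Sset f t ∩ Iic N) = 0 ∧ Ioi M ⊆ Sset f t

lemma Sset_anti (f : ℝ → ℝ) {t s : ℝ} (h : t ≤ s) : Sset f s ⊆ Sset f t :=
  fun _ hx => lt_of_le_of_lt h hx

lemma GP.le {f : ℝ → ℝ} {t N M : ℝ} (h : GP f t N M) : N ≤ M := by
  by_contra hc
  push_neg at hc
  have hsub : Ioc M N ⊆ Sset f t ∩ Iic N := fun x hx => ⟨h.2 hx.1, hx.2⟩
  have := measure_mono_null hsub h.1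
  rw [Real.volume_Ioc] at this
  simp only [ENNReal.ofReal_eq_zero, sub_nonpos] at this
  exact absurd this (not_le.2 hc)

lemma GP.mem_SA {f : ℝ → ℝ} {t N M a : ℝ} (h : GP f t N M)
    (ha : a ∈ {a : ℝ | Ioi a ⊆ Sset f t}) : N ≤ a := by
  by_contra hc
  push_neg at hc
  have hsub : Ioc a N ⊆ Sset f t ∩ Iic N := fun x hx => ⟨ha hx.1, hx.2⟩
  have := measure_mono_null hsub h.1
  rw [Real.volume_Ioc] at this
  simp only [ENNReal.ofReal_eq_zero, sub_nonpos] at this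
  exact absurd this (not_le.2 hc)

lemma GP.aT_le {f : ℝ → ℝ} {t N M : ℝ} (h : GP f t N M) : aT f t ≤ M :=
  csInf_le ⟨N, fun _ ha => h.mem_SA ha⟩ h.2

lemma GP.le_aT {f : ℝ → ℝ} {t N M : ℝ} (h : GP f t N M) : N ≤ aT f t :=
  le_csInf ⟨M, h.2⟩ fun _ ha => h.mem_SA ha

lemma GP.Ioi_aT_subset {f : ℝ → ℝ} {t N M : ℝ} (h : GP f t N M) :
    Ioi (aT f t) ⊆ Sset f t := by
  intro x hx
  obtain ⟨a, ha, hax⟩ := exists_lt_of_csInf_lt ⟨M, h.2⟩ hx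
  exact ha hax

lemma GP.volA_eq {f : ℝ → ℝ} {t N M : ℝ} (h : GP f t N M) :
    volume (Sset f t \ Ioi (aT f t)) = volume ((Sset f t \ Ioi (aT f t)) ∩ Ioc N (aT f t)) := by
  set A := Sset f t \ Ioi (aT f t) with hA
  apply le_antisymm
  · calc volume A ≤ volume ((A ∩ Iic N) ∪ (A ∩ Ioc N (aT f t))) := by
          apply measure_mono
          intro x hx
          rcases le_or_gt x N with hxN | hxN
          · exact Or.inl ⟨hx, hxN⟩
          · exact Or.inr ⟨hx, hxN, not_lt.1 hx.2⟩
      _ ≤ volume (A ∩ Iic N) + volume (A ∩ Ioc N (aT f t)) := measure_union_le _ _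
      _ = volume (A ∩ Ioc N (aT f t)) := by
          rw [measure_mono_null (inter_subset_inter_left _ diff_subset) h.1, zero_add]
  · exact measure_mono inter_subset_left

lemma GP.volA_ne_top {f : ℝ → ℝ} {t N M : ℝ} (h : GP f t N M) :
    volume (Sset f t \ Ioi (aT f t)) ≠ ⊤ := by
  rw [h.volA_eq]
  refine ne_top_of_le_ne_top ?_ (measure_mono inter_subset_right)
  rw [Real.volume_Ioc]
  exact ENNReal.ofReal_ne_top

lemma GP.bfun_le {f : ℝ → ℝ} {t N M : ℝ} (h : GP f t N M) : bfun f t ≤ M :=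
  le_trans (sub_le_self _ ENNReal.toReal_nonneg) h.aT_le

lemma GP.le_bfun {f : ℝ → ℝ} {t N M : ℝ} (h : GP f t N M) : N ≤ bfun f t := by
  have hv : volume (Sset f t \ Ioi (aT f t)) ≤ ENNReal.ofReal (aT f t - N) := by
    rw [h.volA_eq, ← Real.volume_Ioc]
    exact measure_mono inter_subset_right
  have := ENNReal.toReal_le_of_le_ofReal (sub_nonneg.2 h.le_aT) hv
  unfold bfun
  linarith

lemma GP.formula {f : ℝ → ℝ} {t N M : ℝ} (h : GP f t N M) :
    ENNReal.ofReal (M - bfun f t) = volume (Sset f t ∩ Ioc N M) := by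
  set A := Sset f t \ Ioi (aT f t) with hA
  have hsplit : Sset f t ∩ Ioc N M = (A ∩ Ioc N (aT f t)) ∪ Ioc (aT f t) M := by
    ext x
    constructor
    · rintro ⟨hxS, hxN, hxM⟩
      rcases le_or_gt x (aT f t) with hc | hc
      · exact Or.inl ⟨⟨hxS, fun hx => absurd hc (not_le.2 hx)⟩, hxN, hc⟩
      · exact Or.inr ⟨hc, hxM⟩
    · rintro (⟨⟨hxS, _⟩, hxN, hxa⟩ | ⟨hxa, hxM⟩)
      · exact ⟨hxS, hxN, le_trans hxa h.aT_le⟩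
      · exact ⟨h.Ioi_aT_subset hxa, lt_of_le_of_lt h.le_aT hxa, hxM⟩
  have hdisj : Disjoint (A ∩ Ioc N (aT f t)) (Ioc (aT f t) M) := by
    rw [Set.disjoint_left]
    rintro x ⟨_, _, hx2⟩ ⟨hx3, _⟩
    exact absurd hx2 (not_le.2 hx3)
  rw [hsplit, measure_union hdisj measurableSet_Ioc, ← h.volA_eq, Real.volume_Ioc]
  have h1 : M - bfun f t = (volume A).toReal + (M - aT f t) := by
    unfold bfun; ring
  rw [h1, ENNReal.ofReal_add ENNReal.toReal_nonneg (sub_nonneg.2 h.aT_le),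
    ENNReal.ofReal_toReal h.volA_ne_top]

lemma bfun_mono {f : ℝ → ℝ} (hex : ∀ t ∈ Ioo (0:ℝ) 1, ∃ N M, GP f t N M) :
    MonotoneOn (bfun f) (Ioo (0:ℝ) 1) := by
  intro t1 h1 t2 h2 h12
  obtain ⟨N1, M1, gp1⟩ := hex t1 h1
  obtain ⟨N2, M2, gp2⟩ := hex t2 h2
  have gpa : GP f t1 N1 M2 := ⟨gp1.1, fun x hx => Sset_anti f h12 (gp2.2 hx)⟩
  have gpb : GP f t2 N1 M2 :=
    ⟨measure_mono_null (inter_subset_inter_left _ (Sset_anti f h12)) gp1.1, gp2.2⟩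
  have hle : ENNReal.ofReal (M2 - bfun f t2) ≤ ENNReal.ofReal (M2 - bfun f t1) := by
    rw [gpa.formula, gpb.formula]
    exact measure_mono (inter_subset_inter_left _ (Sset_anti f h12))
  rw [ENNReal.ofReal_le_ofReal_iff (sub_nonneg.2 gpa.bfun_le)] at hle
  linarith

lemma profile_GP {p : ℝ → ℝ} (hp0 : Tendsto p atBot (nhds 0)) (hp1 : Tendsto p atTop (nhds 1))
    {t : ℝ} (ht : t ∈ Ioo (0:ℝ) 1) :
    ∃ N M, GP p t N M ∧ Sset p t ∩ Iic N = ∅ := by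
  have h1 : ∀ᶠ x in atBot, p x < t := hp0.eventually (eventually_lt_nhds ht.1)
  have h2 : ∀ᶠ x in atTop, t < p x := hp1.eventually (eventually_gt_nhds ht.2)
  obtain ⟨N, hN⟩ := eventually_atBot.1 h1
  obtain ⟨M, hM⟩ := eventually_atTop.1 h2
  have hemp : Sset p t ∩ Iic N = ∅ := by
    ext x; simp only [mem_inter_iff, mem_setOf_eq, mem_Iic, mem_empty_iff_false, iff_false]
    rintro ⟨hx1, hx2⟩
    exact absurd hx1 (not_lt.2 (le_of_lt (hN x hx2)))
  refine ⟨N, M, ⟨by rw [hemp]; exact measure_empty, fun x hx => hM x (le_of_lt hx)⟩, hemp⟩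



def Cset (f : ℝ → ℝ) (s : ℚ) : Set ℝ := toMeasurable volume {y | (s:ℝ) < f y}

def Dset (f : ℝ → ℝ) (q : ℚ) : Set ℝ := ⋂ (s : ℚ) (_ : s < q), Cset f s

def envSet (f : ℝ → ℝ) (x : ℝ) : Set ℝ :=
  insert (0:ℝ) {u : ℝ | ∃ q : ℚ, u = (q:ℝ) ∧ 0 ≤ (q:ℝ) ∧ (q:ℝ) ≤ 1 ∧ x ∈ Dset f q}

def env (f : ℝ → ℝ) (x : ℝ) : ℝ := sSup (envSet f x)

lemma Dset_measurable (f : ℝ → ℝ) (q : ℚ) : MeasurableSet (Dset f q) :=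
  MeasurableSet.iInter fun _ => MeasurableSet.iInter fun _ => measurableSet_toMeasurable _ _

lemma Dset_anti (f : ℝ → ℝ) {q q' : ℚ} (h : q ≤ q') : Dset f q' ⊆ Dset f q := by
  intro x hx
  exact mem_iInter.2 fun s => mem_iInter.2 fun hs =>
    (mem_iInter.1 (mem_iInter.1 hx s)) (lt_of_lt_of_le hs h)

lemma env_bddAbove (f : ℝ → ℝ) (x : ℝ) : BddAbove (envSet f x) := by
  refine ⟨1, ?_⟩
  rintro u (rfl | ⟨q, rfl, h0, h1, hD⟩)
  · norm_num
  · exact h1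

lemma env_nonneg (f : ℝ → ℝ) (x : ℝ) : 0 ≤ env f x :=
  le_csSup (env_bddAbove f x) (mem_insert _ _)

lemma env_le_one (f : ℝ → ℝ) (x : ℝ) : env f x ≤ 1 := by
  apply csSup_le (insert_nonempty _ _)
  rintro u (rfl | ⟨q, rfl, h0, h1, hD⟩)
  · norm_num
  · exact h1

lemma le_env {f : ℝ → ℝ} (hf : ∀ x, f x ∈ Icc (0:ℝ) 1) (x : ℝ) : f x ≤ env f x := by
  by_contra hc
  push_neg at hc
  obtain ⟨q, hq1, hq2⟩ := exists_rat_btwn hc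
  have hq0 : 0 ≤ (q:ℝ) := le_trans (env_nonneg f x) hq1.le
  have hq1' : (q:ℝ) ≤ 1 := le_trans hq2.le (hf x).2
  have hD : x ∈ Dset f q := by
    refine mem_iInter.2 fun s => mem_iInter.2 fun hs => ?_
    apply subset_toMeasurable
    show (s:ℝ) < f x
    calc (s:ℝ) < (q:ℝ) := by exact_mod_cast hs
      _ < f x := hq2
  have : (q:ℝ) ≤ env f x :=
    le_csSup (env_bddAbove f x) (mem_insert_of_mem _ ⟨q, rfl, hq0, hq1', hD⟩)
  linarith

lemma env_level (f : ℝ → ℝ) {t : ℝ} (ht : 0 ≤ t) :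
    {x | t < env f x} =
      ⋃ q ∈ {q : ℚ | t < (q:ℝ) ∧ (q:ℝ) ≤ 1 ∧ 0 ≤ (q:ℝ)}, Dset f q := by
  ext x
  simp only [mem_setOf_eq, mem_iUnion]
  constructor
  · intro hx
    obtain ⟨u, hu, htu⟩ := exists_lt_of_lt_csSup (insert_nonempty _ _) hx
    rcases hu with rfl | ⟨q, rfl, h0, h1, hD⟩
    · linarith
    · exact ⟨q, ⟨htu, h1, h0⟩, hD⟩
  · rintro ⟨q, ⟨htq, h1, h0⟩, hD⟩
    exact lt_of_lt_of_le htq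
      (le_csSup (env_bddAbove f x) (mem_insert_of_mem _ ⟨q, rfl, h0, h1, hD⟩))

lemma env_measurable (f : ℝ → ℝ) : Measurable (env f) := by
  apply measurable_of_Ioi
  intro r
  rcases lt_or_ge r 0 with hr | hr
  · have : env f ⁻¹' Ioi r = univ :=
      eq_univ_of_forall fun x => lt_of_lt_of_le hr (env_nonneg f x)
    rw [this]; exact MeasurableSet.univ
  · have h : env f ⁻¹' Ioi r = {x | r < env f x} := rfl
    rw [h, env_level f hr]
    exact MeasurableSet.biUnion (Set.to_countable _) fun q _ => Dset_measurable f q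

lemma env_inter_measure {f : ℝ → ℝ} (hf : ∀ x, f x ∈ Icc (0:ℝ) 1) {t : ℝ} (ht : 0 < t)
    {E : Set ℝ} (hE : MeasurableSet E) :
    volume ({x | t < env f x} ∩ E) = volume ({x | t < f x} ∩ E) := by
  apply le_antisymm
  · rw [env_level f ht.le, iUnion₂_inter]
    have hcnt : ({q : ℚ | t < (q:ℝ) ∧ (q:ℝ) ≤ 1 ∧ 0 ≤ (q:ℝ)} : Set ℚ).Countable :=
      Set.to_countable _
    have hdir : DirectedOn (Function.onFun ((· ⊆ ·)) fun q : ℚ => Dset f q ∩ E)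
        {q : ℚ | t < (q:ℝ) ∧ (q:ℝ) ≤ 1 ∧ 0 ≤ (q:ℝ)} := by
      intro i hi j hj
      refine ⟨min i j, ⟨?_, ?_, ?_⟩, ?_, ?_⟩
      · rcases min_choice i j with h | h <;> rw [h]
        exacts [hi.1, hj.1]
      · rcases min_choice i j with h | h <;> rw [h]
        exacts [hi.2.1, hj.2.1]
      · rcases min_choice i j with h | h <;> rw [h]
        exacts [hi.2.2, hj.2.2]
      · exact inter_subset_inter_left _ (Dset_anti f (by exact_mod_cast min_le_left i j))
      · exact inter_subset_inter_left _ (Dset_anti f (by exact_mod_cast min_le_right i j))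
    rw [measure_biUnion_eq_iSup hcnt hdir]
    apply iSup₂_le
    intro q hq
    obtain ⟨s, hts, hsq⟩ := exists_rat_btwn hq.1
    have hsq' : s < q := by exact_mod_cast hsq
    have hsub : Dset f q ∩ E ⊆ Cset f s ∩ E := by
      apply inter_subset_inter_left
      intro y hy
      exact (mem_iInter.1 (mem_iInter.1 hy s)) hsq'
    calc volume (Dset f q ∩ E) ≤ volume (Cset f s ∩ E) := measure_mono hsub
      _ = volume ({y | (s:ℝ) < f y} ∩ E) := by
          rw [Cset]; exact Measure.measure_toMeasurable_inter_of_sFinite hE _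
      _ ≤ volume ({x | t < f x} ∩ E) :=
          measure_mono (inter_subset_inter_left _ fun y hy => lt_trans hts hy)
  · exact measure_mono (inter_subset_inter_left _ fun x hx =>
      lt_of_lt_of_le hx (le_env hf x))

lemma env_le_ae {f h : ℝ → ℝ} (hf0 : ∀ x, 0 ≤ f x) (hh : Measurable h)
    (hfh : ∀ᵐ x, f x ≤ h x) : ∀ᵐ x, env f x ≤ h x := by
  have hbad : ∀ s : ℚ, volume (Cset f s ∩ {x | h x < (s:ℝ)}) = 0 := by
    intro s
    have hmeas : MeasurableSet {x | h x < (s:ℝ)} := measurableSet_lt hh measurable_const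
    rw [Cset, Measure.measure_toMeasurable_inter_of_sFinite hmeas]
    apply measure_mono_null (fun y hy => ?_) (ae_iff.1 hfh)
    exact fun hle => absurd (lt_of_le_of_lt hle hy.2) (not_lt.2 hy.1.le)
  have hbig : ∀ᵐ x, ∀ s : ℚ, x ∉ Cset f s ∩ {x | h x < (s:ℝ)} := by
    rw [ae_all_iff]
    intro s
    rw [ae_iff]
    simpa only [not_not, setOf_mem_eq] using hbad s
  filter_upwards [hbig, hfh] with x hx hfx
  apply csSup_le (insert_nonempty _ _)
  rintro u (rfl | ⟨q, rfl, h0, h1, hD⟩)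
  · exact le_trans (hf0 x) hfx
  · by_contra hc
    push_neg at hc
    obtain ⟨s, hs1, hs2⟩ := exists_rat_btwn hc
    have hsq : s < q := by exact_mod_cast hs2
    have hxC : x ∈ Cset f s := (mem_iInter.1 (mem_iInter.1 hD s)) hsq
    exact hx s ⟨hxC, hs1⟩


/-! ### Monotone measurable extension -/

lemma sfun_mono : Monotone (fun u : ℝ => u / (1 + |u|)) := by
  intro u v huv
  have hu : 0 < 1 + |u| := by positivity
  have hv : 0 < 1 + |v| := by positivity
  rw [div_le_div_iff₀ hu hv]
  rcases le_or_gt 0 u with h0u | h0u <;> rcases le_or_gt 0 v with h0v | h0v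
  · rw [abs_of_nonneg h0u, abs_of_nonneg h0v]; nlinarith
  · linarith
  · rw [abs_of_neg h0u, abs_of_nonneg h0v]; nlinarith
  · rw [abs_of_neg h0u, abs_of_neg h0v]; nlinarith

lemma sfun_mem (u : ℝ) : u / (1 + |u|) ∈ Ioo (-1:ℝ) 1 := by
  have hu : 0 < 1 + |u| := by positivity
  constructor
  · rw [lt_div_iff₀ hu]
    cases abs_cases u with
    | inl h => nlinarith [abs_nonneg u]
    | inr h => nlinarith
  · rw [div_lt_iff₀ hu]
    cases abs_cases u with
    | inl h => nlinarith
    | inr h => nlinarith [abs_nonneg u]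

lemma exists_measurable_ext {β : ℝ → ℝ} (h : MonotoneOn β (Ioo (0:ℝ) 1)) :
    ∃ b : ℝ → ℝ, Measurable b ∧ ∀ t ∈ Ioo (0:ℝ) 1, b t = β t := by
  set e : ℝ → ℝ := fun u => (1 + u / (1 + |u|)) / 2 with he
  have he_mem : ∀ u, e u ∈ Ioo (0:ℝ) 1 := by
    intro u
    obtain ⟨h1, h2⟩ := sfun_mem u
    constructor <;> simp only [he] <;> linarith
  have he_mono : Monotone e := fun u v huv => by
    have := sfun_mono huv
    simp only [he]
    linarith
  have hg : Monotone (β ∘ e) := fun u v huv => h (he_mem u) (he_mem v) (he_mono huv)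
  set i : ℝ → ℝ := fun t => (2*t - 1) / (1 - |2*t - 1|) with hi
  have hi_meas : Measurable i := by
    apply Measurable.div
    · exact (measurable_id.const_mul 2).sub measurable_const
    · exact measurable_const.sub ((measurable_id.const_mul 2).sub measurable_const).abs
  refine ⟨(β ∘ e) ∘ i, (hg.measurable).comp hi_meas, ?_⟩
  intro t ht
  have hw : |2*t - 1| < 1 := by
    rw [abs_lt]; constructor <;> [linarith [ht.1]; linarith [ht.2]]
  have h1 : 0 < 1 - |2*t - 1| := by linarith
  have key : e (i t) = t := by
    simp only [he, hi]
    rw [show |(2*t - 1) / (1 - |2*t - 1|)| = |2*t - 1| / (1 - |2*t - 1|) by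
      rw [abs_div, abs_of_pos h1]]
    have h2 : 1 + |2*t - 1| / (1 - |2*t - 1|) = 1 / (1 - |2*t - 1|) := by
      field_simp
      ring
    have h3 : (2*t - 1) / (1 - |2*t - 1|) / (1 / (1 - |2*t - 1|)) = 2*t - 1 := by
      field_simp
    rw [h2, h3]
    ring
  show β (e (i t)) = β t
  rw [key]

/-! ### The increasing-rearrangement representation -/

def Tset (β : ℝ → ℝ) (x : ℝ) : Set ℝ := {t | t ∈ Ioo (0:ℝ) 1 ∧ β t < x}

def rfun (β : ℝ → ℝ) (x : ℝ) : ℝ := sSup (Tset β x)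

lemma rfun_nonneg (β : ℝ → ℝ) (x : ℝ) : 0 ≤ rfun β x :=
  Real.sSup_nonneg fun t ht => ht.1.1.le

lemma rfun_le_one (β : ℝ → ℝ) (x : ℝ) : rfun β x ≤ 1 :=
  Real.sSup_le (fun t ht => ht.1.2.le) zero_le_one

lemma Tset_bddAbove (β : ℝ → ℝ) (x : ℝ) : BddAbove (Tset β x) :=
  ⟨1, fun t ht => ht.1.2.le⟩

lemma rfun_mono (β : ℝ → ℝ) : Monotone (rfun β) := by
  intro x y hxy
  rcases eq_empty_or_nonempty (Tset β x) with he | hne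
  · rw [rfun, he, Real.sSup_empty]; exact rfun_nonneg β y
  · exact csSup_le_csSup (Tset_bddAbove β y) hne fun t ht => ⟨ht.1, lt_of_lt_of_le ht.2 hxy⟩

lemma vol_Tset {β : ℝ → ℝ} (hmono : MonotoneOn β (Ioo (0:ℝ) 1)) (x : ℝ) :
    volume (Tset β x) = ENNReal.ofReal (rfun β x) := by
  rcases eq_empty_or_nonempty (Tset β x) with he | hne
  · rw [rfun, he, Real.sSup_empty]; simp
  · have hbdd := Tset_bddAbove β x
    set c := rfun β x with hc
    have hsub1 : Tset β x ⊆ Ioc 0 c := fun t ht => ⟨ht.1.1, le_csSup hbdd ht⟩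
    have hsub2 : Ioo 0 c ⊆ Tset β x := by
      intro t ht
      obtain ⟨t', ht'T, htt'⟩ := exists_lt_of_lt_csSup hne ht.2
      have htI : t ∈ Ioo (0:ℝ) 1 := ⟨ht.1, lt_trans htt' ht'T.1.2⟩
      exact ⟨htI, lt_of_le_of_lt (hmono htI ht'T.1 htt'.le) ht'T.2⟩
    apply le_antisymm
    · calc volume (Tset β x) ≤ volume (Ioc 0 c) := measure_mono hsub1
        _ = ENNReal.ofReal c := by rw [Real.volume_Ioc, sub_zero]
    · calc ENNReal.ofReal c = volume (Ioo 0 c) := by rw [Real.volume_Ioo, sub_zero]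
        _ ≤ volume (Tset β x) := measure_mono hsub2

lemma rfun_gt_iff {β : ℝ → ℝ} {t : ℝ} (ht0 : 0 ≤ t) (x : ℝ) :
    t < rfun β x ↔ ∃ s, s ∈ Ioo t 1 ∧ β s < x := by
  constructor
  · intro hx
    rcases eq_empty_or_nonempty (Tset β x) with he | hne
    · rw [rfun, he, Real.sSup_empty] at hx; linarith
    · obtain ⟨s, hsT, hts⟩ := exists_lt_of_lt_csSup hne hx
      exact ⟨s, ⟨hts, hsT.1.2⟩, hsT.2⟩
  · rintro ⟨s, hs, hsx⟩
    have hsT : s ∈ Tset β x := ⟨⟨lt_of_le_of_lt ht0 hs.1, hs.2⟩, hsx⟩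
    exact lt_of_lt_of_le hs.1 (le_csSup (Tset_bddAbove β x) hsT)

lemma image_bddBelow {β : ℝ → ℝ} (hmono : MonotoneOn β (Ioo (0:ℝ) 1)) {t : ℝ}
    (ht : t ∈ Ioo (0:ℝ) 1) : β t ∈ lowerBounds (β '' Ioo t 1) := by
  rintro y ⟨s, hs, rfl⟩
  exact hmono ht ⟨lt_trans ht.1 hs.1, hs.2⟩ hs.1.le

lemma image_nonempty {t : ℝ} (ht : t ∈ Ioo (0:ℝ) 1) (β : ℝ → ℝ) :
    (β '' Ioo t 1).Nonempty :=
  ⟨β ((t+1)/2), mem_image_of_mem β ⟨by linarith [ht.1, ht.2], by linarith [ht.2]⟩⟩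

lemma Sset_rfun {β : ℝ → ℝ} (hmono : MonotoneOn β (Ioo (0:ℝ) 1)) {t : ℝ}
    (ht : t ∈ Ioo (0:ℝ) 1) :
    Sset (rfun β) t = Ioi (sInf (β '' Ioo t 1)) := by
  have hne := image_nonempty ht β
  have hbb : BddBelow (β '' Ioo t 1) := ⟨β t, image_bddBelow hmono ht⟩
  ext x
  rw [mem_Ioi]
  show t < rfun β x ↔ _
  rw [rfun_gt_iff ht.1.le]
  constructor
  · rintro ⟨s, hs, hsx⟩
    exact lt_of_le_of_lt (csInf_le hbb (mem_image_of_mem β hs)) hsx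
  · intro hx
    obtain ⟨y, ⟨s, hs, rfl⟩, hyx⟩ := exists_lt_of_csInf_lt hne hx
    exact ⟨s, hs, hyx⟩

lemma bfun_rfun {β : ℝ → ℝ} (hmono : MonotoneOn β (Ioo (0:ℝ) 1)) {t : ℝ}
    (ht : t ∈ Ioo (0:ℝ) 1) :
    bfun (rfun β) t = sInf (β '' Ioo t 1) := by
  set g := sInf (β '' Ioo t 1) with hg
  have hS : Sset (rfun β) t = Ioi g := Sset_rfun hmono ht
  have haT : aT (rfun β) t = g := by
    have hSA : {a : ℝ | Ioi a ⊆ Sset (rfun β) t} = Ici g := by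
      ext a
      rw [hS, mem_Ici]
      constructor
      · intro hsub
        by_contra hc
        push_neg at hc
        have : (a + g)/2 ∈ Ioi a := by rw [mem_Ioi]; linarith
        have := hsub this
        rw [mem_Ioi] at this
        linarith
      · intro hga
        exact Ioi_subset_Ioi hga
    show sInf {a : ℝ | Ioi a ⊆ Sset (rfun β) t} = g
    rw [hSA, csInf_Ici]
  rw [bfun, haT, hS]
  simp

lemma gamma_ae {β : ℝ → ℝ} (hmono : MonotoneOn β (Ioo (0:ℝ) 1)) :
    volume {t | t ∈ Ioo (0:ℝ) 1 ∧ β t ≠ sInf (β '' Ioo t 1)} = 0 := by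
  have hle : ∀ t ∈ Ioo (0:ℝ) 1, β t ≤ sInf (β '' Ioo t 1) := fun t ht =>
    le_csInf (image_nonempty ht β) fun y hy => image_bddBelow hmono ht hy
  set J : ℚ → Set ℝ := fun r =>
    {t | t ∈ Ioo (0:ℝ) 1 ∧ β t < (r:ℝ) ∧ (r:ℝ) < sInf (β '' Ioo t 1)} with hJ
  have hsub : {t | t ∈ Ioo (0:ℝ) 1 ∧ β t ≠ sInf (β '' Ioo t 1)} ⊆ ⋃ r : ℚ, J r := by
    intro t ⟨ht, hne⟩
    have hlt : β t < sInf (β '' Ioo t 1) := lt_of_le_of_ne (hle t ht) hne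
    obtain ⟨r, hr1, hr2⟩ := exists_rat_btwn hlt
    exact mem_iUnion.2 ⟨r, ht, hr1, hr2⟩
  refine measure_mono_null hsub (measure_iUnion_null fun r => ?_)
  have : (J r).Subsingleton := by
    intro t1 h1 t2 h2
    by_contra hne
    rcases lt_or_gt_of_ne hne with hlt | hlt
    · have hmem : t2 ∈ Ioo t1 1 := ⟨hlt, h2.1.2⟩
      have : sInf (β '' Ioo t1 1) ≤ β t2 :=
        csInf_le ⟨β t1, image_bddBelow hmono h1.1⟩ (mem_image_of_mem β hmem)
      linarith [h1.2.2, h2.2.1]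
    · have hmem : t1 ∈ Ioo t2 1 := ⟨hlt, h1.1.2⟩
      have : sInf (β '' Ioo t2 1) ≤ β t1 :=
        csInf_le ⟨β t2, image_bddBelow hmono h2.1⟩ (mem_image_of_mem β hmem)
      linarith [h2.2.2, h1.2.1]
  exact this.measure_zero _

/-! ### Indicator difference helpers -/

lemma norm_ind_sub_of_le {a b : ℝ} (hab : a ≤ b) (x : ℝ) :
    ‖(if a < x then (1:ℝ) else 0) - (if b < x then 1 else 0)‖
      = (Ioc a b).indicator (fun _ => (1:ℝ)) x := by
  have hrw : (Ioc a b).indicator (fun _ => (1:ℝ)) x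
      = if a < x then (if x ≤ b then (1:ℝ) else 0) else 0 := by
    simp only [Set.indicator, mem_Ioc]
    split_ifs <;> first | rfl | tauto
  rw [hrw]
  simp only [Real.norm_eq_abs]
  split_ifs <;> first | (norm_num; done) | (exfalso; linarith)

lemma norm_ind_sub (a b : ℝ) (x : ℝ) :
    ‖(if a < x then (1:ℝ) else 0) - (if b < x then 1 else 0)‖
      = (Ioc (min a b) (max a b)).indicator (fun _ => (1:ℝ)) x := by
  rcases le_total a b with hab | hab
  · rw [min_eq_left hab, max_eq_right hab]; exact norm_ind_sub_of_le hab x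
  · rw [min_eq_right hab, max_eq_left hab, norm_sub_rev]; exact norm_ind_sub_of_le hab x

lemma integrable_ind_sub (a b : ℝ) :
    Integrable (fun x => (if a < x then (1:ℝ) else 0) - (if b < x then 1 else 0)) volume := by
  apply Integrable.mono' (g := (Ioc (min a b) (max a b)).indicator (fun _ => (1:ℝ)))
  · rw [integrable_indicator_iff measurableSet_Ioc]
    exact integrableOn_const (by rw [Real.volume_Ioc]; exact ENNReal.ofReal_ne_top)
  · apply Measurable.aestronglyMeasurable
    apply Measurable.sub <;>
      exact Measurable.ite (measurableSet_lt measurable_const measurable_id)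
        measurable_const measurable_const
  · exact ae_of_all _ fun x => le_of_eq (norm_ind_sub a b x)

lemma integral_norm_ind_sub (a b : ℝ) :
    (∫ x, ‖(if a < x then (1:ℝ) else 0) - (if b < x then 1 else 0)‖) = |a - b| := by
  simp_rw [norm_ind_sub a b]
  rw [integral_indicator measurableSet_Ioc, setIntegral_const, smul_eq_mul, mul_one,
    measureReal_def, Real.volume_Ioc, ENNReal.toReal_ofReal (by simp [min_le_max])]
  rcases le_total a b with h | h
  · rw [min_eq_left h, max_eq_right h, abs_of_nonpos (by linarith)]; ring
  · rw [min_eq_right h, max_eq_left h, abs_of_nonneg (by linarith)]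

lemma integral_ind_set {S I : Set ℝ} (hS : MeasurableSet S) :
    (∫ t in I, S.indicator (fun _ => (1:ℝ)) t) = (volume (S ∩ I)).toReal := by
  rw [integral_indicator hS, setIntegral_const, measureReal_def, Measure.restrict_apply hS, smul_eq_mul, mul_one]


lemma GP.weaken {f : ℝ → ℝ} {t N M N' M' : ℝ} (h : GP f t N M) (hN : N' ≤ N) (hM : M ≤ M') :
    GP f t N' M' :=
  ⟨measure_mono_null (inter_subset_inter_right _ (Iic_subset_Iic.2 hN)) h.1,
    fun _ hx => h.2 (lt_of_le_of_lt hM hx)⟩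

lemma GP_rfun {β : ℝ → ℝ} (hmono : MonotoneOn β (Ioo (0:ℝ) 1)) {t : ℝ}
    (ht : t ∈ Ioo (0:ℝ) 1) : GP (rfun β) t (β t) (β ((t+1)/2)) := by
  have hS := Sset_rfun hmono ht
  have hmem : (t+1)/2 ∈ Ioo t 1 := ⟨by linarith [ht.2], by linarith [ht.2]⟩
  have h1 : β t ≤ sInf (β '' Ioo t 1) :=
    le_csInf (image_nonempty ht β) fun y hy => image_bddBelow hmono ht hy
  have h2 : sInf (β '' Ioo t 1) ≤ β ((t+1)/2) :=
    csInf_le ⟨β t, image_bddBelow hmono ht⟩ (mem_image_of_mem β hmem)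
  constructor
  · have hemp : Sset (rfun β) t ∩ Iic (β t) = ∅ := by
      rw [hS]
      apply eq_empty_iff_forall_notMem.2
      rintro x ⟨hx1, hx2⟩
      rw [mem_Ioi] at hx1
      rw [mem_Iic] at hx2
      linarith
    rw [hemp]; exact measure_empty
  · rw [hS]; exact Ioi_subset_Ioi h2

lemma integrableOn_ind_Iio (c N M : ℝ) :
    IntegrableOn (fun t => if t < c then (1:ℝ) else 0) (Ioo N M) volume := by
  have : (fun t => if t < c then (1:ℝ) else 0) = (Iio c).indicator (fun _ => (1:ℝ)) := by
    ext t; simp [Set.indicator, mem_Iio]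
  rw [this]
  exact (integrableOn_const (by rw [Real.volume_Ioo]; exact ENNReal.ofReal_ne_top)).indicator
    measurableSet_Iio

lemma integral_ind_lt {c : ℝ} (hc : c ∈ Icc (0:ℝ) 1) :
    ∫ t in Ioo (0:ℝ) 1, (if t < c then (1:ℝ) else 0) = c := by
  have h1 : (fun t => if t < c then (1:ℝ) else 0) = (Iio c).indicator (fun _ => (1:ℝ)) := by
    ext t; simp [Set.indicator, mem_Iio]
  rw [h1, integral_indicator measurableSet_Iio, Measure.restrict_restrict measurableSet_Iio,
    setIntegral_const]
  have h2 : Iio c ∩ Ioo (0:ℝ) 1 = Ioo 0 c := by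
    ext y
    constructor
    · rintro ⟨hy1, hy2, _⟩; exact ⟨hy2, hy1⟩
    · rintro ⟨hy1, hy2⟩; exact ⟨hy2, hy1, lt_of_lt_of_le hy2 hc.2⟩
  rw [h2, measureReal_def, Real.volume_Ioo, smul_eq_mul, mul_one, ENNReal.toReal_ofReal (by linarith [hc.1])]
  ring

lemma core {F G : ℝ → ℝ} (hF : Measurable F) (hG : Measurable G)
    (hF01 : ∀ x, F x ∈ Icc (0:ℝ) 1) (hG01 : ∀ x, G x ∈ Icc (0:ℝ) 1)
    (hFG : Integrable (fun x => F x - G x))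
    (hNM : ∀ t ∈ Ioo (0:ℝ) 1, ∃ N M, GP F t N M ∧ GP G t N M) :
    (∫ x, (F x - G x)) = (∫ t in Ioo (0:ℝ) 1, (bfun G t - bfun F t)) ∧
      IntegrableOn (fun t => bfun G t - bfun F t) (Ioo (0:ℝ) 1) := by
  set ν := volume.restrict (Ioo (0:ℝ) 1) with hν
  set H : ℝ × ℝ → ℝ :=
    fun z => (if z.2 < F z.1 then (1:ℝ) else 0) - (if z.2 < G z.1 then (1:ℝ) else 0) with hH
  have hHmeas : Measurable H := by
    apply Measurable.sub
    · exact Measurable.ite (measurableSet_lt measurable_snd (hF.comp measurable_fst))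
        measurable_const measurable_const
    · exact Measurable.ite (measurableSet_lt measurable_snd (hG.comp measurable_fst))
        measurable_const measurable_const
  have hslice : ∀ x, Integrable (fun t => H (x, t)) ν :=
    fun x => (integrableOn_ind_Iio (F x) 0 1).sub (integrableOn_ind_Iio (G x) 0 1)
  have hxint : ∀ x, (∫ t, H (x, t) ∂ν) = F x - G x := by
    intro x
    rw [hν]
    rw [integral_sub (integrableOn_ind_Iio (F x) 0 1) (integrableOn_ind_Iio (G x) 0 1),
      integral_ind_lt (hF01 x), integral_ind_lt (hG01 x)]
  have habs : ∀ x, (∫ t, ‖H (x, t)‖ ∂ν) = |F x - G x| := by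
    intro x
    rcases le_total (G x) (F x) with hle | hle
    · have heq : ∀ t, ‖H (x, t)‖ = H (x, t) := by
        intro t
        rw [Real.norm_eq_abs]
        apply abs_of_nonneg
        simp only [hH]
        split_ifs with h1 h2 h3 <;> linarith
      calc (∫ t, ‖H (x, t)‖ ∂ν) = ∫ t, H (x, t) ∂ν := by simp_rw [heq]
        _ = F x - G x := hxint x
        _ = |F x - G x| := (abs_of_nonneg (by linarith)).symm
    · have heq : ∀ t, ‖H (x, t)‖ = -H (x, t) := by
        intro t
        rw [Real.norm_eq_abs]
        apply abs_of_nonpos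
        simp only [hH]
        split_ifs with h1 h2 h3 <;> linarith
      calc (∫ t, ‖H (x, t)‖ ∂ν) = ∫ t, -H (x, t) ∂ν := by simp_rw [heq]
        _ = -(F x - G x) := by rw [integral_neg, hxint x]
        _ = |F x - G x| := by rw [abs_of_nonpos (by linarith)]
  have hprod : Integrable H (volume.prod ν) := by
    rw [integrable_prod_iff hHmeas.aestronglyMeasurable]
    constructor
    · exact ae_of_all _ hslice
    · have : (fun x => ∫ t, ‖H (x, t)‖ ∂ν) = fun x => |F x - G x| := funext habs
      rw [this]
      exact hFG.abs
  have hswap : (∫ x, ∫ t, H (x, t) ∂ν) = ∫ t, (∫ x, H (x, t)) ∂ν :=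
    integral_integral_swap hprod
  have htInt : ∀ t ∈ Ioo (0:ℝ) 1, (∫ x, H (x, t)) = bfun G t - bfun F t := by
    intro t ht
    obtain ⟨N, M, hGPF, hGPG⟩ := hNM t ht
    have hSF : MeasurableSet (Sset F t) := hF measurableSet_Ioi
    have hSG : MeasurableSet (Sset G t) := hG measurableSet_Ioi
    have hae : (fun x => H (x, t)) =ᵐ[volume] (Ioc N M).indicator (fun x => H (x, t)) := by
      have hnull : volume ((Sset F t ∩ Iic N) ∪ (Sset G t ∩ Iic N)) = 0 :=
        measure_union_null hGPF.1 hGPG.1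
      refine measure_mono_null ?_ hnull
      intro x hx
      simp only [mem_compl_iff, mem_setOf_eq] at hx
      by_cases hmem : x ∈ Ioc N M
      · rw [Set.indicator_of_mem hmem] at hx; exact absurd rfl hx
      · rw [Set.indicator_of_notMem hmem] at hx
        rcases le_or_gt x N with hxN | hxN
        · by_cases h1 : t < F x
          · exact Or.inl ⟨h1, hxN⟩
          · by_cases h2 : t < G x
            · exact Or.inr ⟨h2, hxN⟩
            · exfalso; apply hx; simp only [hH, if_neg h1, if_neg h2, sub_zero]
        · have hxM : M < x := by
            by_contra hc
            exact hmem ⟨hxN, not_lt.1 hc⟩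
          exfalso
          apply hx
          simp only [hH]
          rw [if_pos (show t < F x from hGPF.2 hxM), if_pos (show t < G x from hGPG.2 hxM),
            sub_self]
    rw [integral_congr_ae hae, integral_indicator measurableSet_Ioc]
    have hconst : volume (Ioc N M) < ⊤ := by rw [Real.volume_Ioc]; exact ENNReal.ofReal_lt_top
    have hint1 : IntegrableOn (fun x => if t < F x then (1:ℝ) else 0) (Ioc N M) volume := by
      have : (fun x => if t < F x then (1:ℝ) else 0) = (Sset F t).indicator (fun _ => (1:ℝ)) := by
        ext y; simp [Set.indicator, Sset]
      rw [this]
      exact (integrableOn_const hconst.ne).indicator hSF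
    have hint2 : IntegrableOn (fun x => if t < G x then (1:ℝ) else 0) (Ioc N M) volume := by
      have : (fun x => if t < G x then (1:ℝ) else 0) = (Sset G t).indicator (fun _ => (1:ℝ)) := by
        ext y; simp [Set.indicator, Sset]
      rw [this]
      exact (integrableOn_const hconst.ne).indicator hSG
    have hcompute : ∀ (f : ℝ → ℝ), Measurable f → GP f t N M →
        (∫ x in Ioc N M, (if t < f x then (1:ℝ) else 0)) = M - bfun f t := by
      intro f hf hgp
      have hSf : MeasurableSet (Sset f t) := hf measurableSet_Ioi
      have : (fun x => if t < f x then (1:ℝ) else 0) = (Sset f t).indicator (fun _ => (1:ℝ)) := by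
        ext y; simp [Set.indicator, Sset]
      rw [this, integral_indicator hSf, setIntegral_const, measureReal_def, Measure.restrict_apply hSf,
        smul_eq_mul, mul_one, ← hgp.formula, ENNReal.toReal_ofReal (sub_nonneg.2 hgp.bfun_le)]
    simp only [hH]
    rw [integral_sub hint1 hint2, hcompute F hF hGPF, hcompute G hG hGPG]
    ring
  constructor
  · calc (∫ x, (F x - G x))
        = ∫ x, ∫ t, H (x, t) ∂ν := by
          congr 1
          exact funext fun x => (hxint x).symm
      _ = ∫ t, (∫ x, H (x, t)) ∂ν := hswap
      _ = ∫ t in Ioo (0:ℝ) 1, (bfun G t - bfun F t) :=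
          setIntegral_congr_fun measurableSet_Ioo fun t ht => htInt t ht
  · have h2 : Integrable (fun t => ∫ x, H (x, t)) ν := hprod.swap.integral_prod_left
    exact h2.congr ((ae_restrict_iff' measurableSet_Ioo).2 (ae_of_all _ htInt))


lemma integral_ind_profile {b β : ℝ → ℝ} (hb : Measurable b)
    (hmono : MonotoneOn β (Ioo (0:ℝ) 1))
    (hbβ : ∀ t ∈ Ioo (0:ℝ) 1, b t = β t) (x : ℝ) :
    IntegrableOn (fun t => if b t < x then (1:ℝ) else 0) (Ioo (0:ℝ) 1) volume ∧
    (∫ t in Ioo (0:ℝ) 1, (if b t < x then (1:ℝ) else 0)) = rfun β x := by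
  have hmeasS : MeasurableSet {t : ℝ | b t < x} := measurableSet_lt hb measurable_const
  have hfeq : (fun t => if b t < x then (1:ℝ) else 0)
      = ({t : ℝ | b t < x}).indicator (fun _ => (1:ℝ)) := by
    ext t; simp [Set.indicator, mem_setOf_eq]
  constructor
  · rw [hfeq]
    exact (integrableOn_const (by
      rw [Real.volume_Ioo]; exact ENNReal.ofReal_ne_top)).indicator hmeasS
  · rw [hfeq, integral_ind_set hmeasS]
    have hset : {t : ℝ | b t < x} ∩ Ioo (0:ℝ) 1 = Tset β x := by
      ext t
      constructor
      · rintro ⟨h1, h2⟩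
        refine ⟨h2, ?_⟩
        have hb' : b t < x := h1
        rwa [hbβ t h2] at hb'
      · rintro ⟨h1, h2⟩
        refine ⟨?_, h1⟩
        show b t < x
        rwa [hbβ t h1]
    rw [hset, vol_Tset hmono x, ENNReal.toReal_ofReal (rfun_nonneg _ _)]

end Stmt4Aux
open Stmt4Aux

/-- If `p, q` are interpolating profiles with `p - q` Lebesgue integrable,
then `∫ (p - q) = ∫ (p̄ - q̄)` where `p̄, q̄` are the increasing rearrangements. -/
theorem stmt4 (p q : ℝ → ℝ) (hp : IsProfile p) (hq : IsProfile q)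
    (hint : Integrable (fun x => p x - q x)) :
    ∫ x, (p x - q x) = ∫ x, (rearr p x - rearr q x) := by
  obtain ⟨hp01, hpb, hpt⟩ := hp
  obtain ⟨hq01, hqb, hqt⟩ := hq
  set ν := volume.restrict (Ioo (0:ℝ) 1) with hν
  -- measurable version of the difference
  have hd := hint.aestronglyMeasurable
  set d₀ : ℝ → ℝ := hd.mk _ with hd₀def
  have hd₀meas : Measurable d₀ := hd.stronglyMeasurable_mk.measurable
  have hdae : (fun x => p x - q x) =ᵐ[volume] d₀ := hd.ae_eq_mk
  -- measurable envelopes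
  have hFmeas := env_measurable p
  have hGmeas := env_measurable q
  have hF01 : ∀ x, env p x ∈ Icc (0:ℝ) 1 := fun x => ⟨env_nonneg p x, env_le_one p x⟩
  have hG01 : ∀ x, env q x ∈ Icc (0:ℝ) 1 := fun x => ⟨env_nonneg q x, env_le_one q x⟩
  have h1 : ∀ᵐ x, env p x ≤ env q x + d₀ x := by
    apply env_le_ae (fun x => (hp01 x).1) (hGmeas.add hd₀meas)
    filter_upwards [hdae] with x hx
    have h := le_env hq01 x
    have hx' : p x - q x = d₀ x := hx
    show p x ≤ env q x + d₀ x
    linarith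
  have h2 : ∀ᵐ x, env q x ≤ env p x - d₀ x := by
    apply env_le_ae (fun x => (hq01 x).1) (hFmeas.sub hd₀meas)
    filter_upwards [hdae] with x hx
    have h := le_env hp01 x
    have hx' : p x - q x = d₀ x := hx
    show q x ≤ env p x - d₀ x
    linarith
  have hFGd : (fun x => env p x - env q x) =ᵐ[volume] fun x => p x - q x := by
    filter_upwards [h1, h2, hdae] with x ha hb hc
    have hc' : p x - q x = d₀ x := hc
    linarith
  have hFGint : Integrable (fun x => env p x - env q x) := hint.congr hFGd.symm
  -- good pairs for the envelopes
  have hexp : ∀ t ∈ Ioo (0:ℝ) 1, ∃ N M, GP p t N M ∧ GP (env p) t N M := by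
    intro t ht
    obtain ⟨N, M, hgp, hemp⟩ := profile_GP hpb hpt ht
    refine ⟨N, M, hgp, ?_, fun x hx => lt_of_lt_of_le (hgp.2 hx) (le_env hp01 x)⟩
    rw [show Sset (env p) t ∩ Iic N = {x | t < env p x} ∩ Iic N from rfl,
      env_inter_measure hp01 ht.1 measurableSet_Iic]
    exact hgp.1
  have hexq : ∀ t ∈ Ioo (0:ℝ) 1, ∃ N M, GP q t N M ∧ GP (env q) t N M := by
    intro t ht
    obtain ⟨N, M, hgp, hemp⟩ := profile_GP hqb hqt ht
    refine ⟨N, M, hgp, ?_, fun x hx => lt_of_lt_of_le (hgp.2 hx) (le_env hq01 x)⟩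
    rw [show Sset (env q) t ∩ Iic N = {x | t < env q x} ∩ Iic N from rfl,
      env_inter_measure hq01 ht.1 measurableSet_Iic]
    exact hgp.1
  have hbfunF : ∀ t ∈ Ioo (0:ℝ) 1, bfun (env p) t = bfun p t := by
    intro t ht
    obtain ⟨N, M, hgp, hgpF⟩ := hexp t ht
    have henv : volume (Sset (env p) t ∩ Ioc N M) = volume (Sset p t ∩ Ioc N M) :=
      env_inter_measure hp01 ht.1 measurableSet_Ioc
    have := hgpF.formula.trans (henv.trans hgp.formula.symm)
    have := (ENNReal.ofReal_eq_ofReal_iff (sub_nonneg.2 hgpF.bfun_le)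
      (sub_nonneg.2 hgp.bfun_le)).1 this
    linarith
  have hbfunG : ∀ t ∈ Ioo (0:ℝ) 1, bfun (env q) t = bfun q t := by
    intro t ht
    obtain ⟨N, M, hgp, hgpF⟩ := hexq t ht
    have henv : volume (Sset (env q) t ∩ Ioc N M) = volume (Sset q t ∩ Ioc N M) :=
      env_inter_measure hq01 ht.1 measurableSet_Ioc
    have := hgpF.formula.trans (henv.trans hgp.formula.symm)
    have := (ENNReal.ofReal_eq_ofReal_iff (sub_nonneg.2 hgpF.bfun_le)
      (sub_nonneg.2 hgp.bfun_le)).1 this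
    linarith
  have hNM1 : ∀ t ∈ Ioo (0:ℝ) 1, ∃ N M, GP (env p) t N M ∧ GP (env q) t N M := by
    intro t ht
    obtain ⟨Np, Mp, _, hFgp⟩ := hexp t ht
    obtain ⟨Nq, Mq, _, hGgp⟩ := hexq t ht
    exact ⟨min Np Nq, max Mp Mq, hFgp.weaken (min_le_left _ _) (le_max_left _ _),
      hGgp.weaken (min_le_right _ _) (le_max_right _ _)⟩
  obtain ⟨heq1, hint1⟩ := core hFmeas hGmeas hF01 hG01 hFGint hNM1
  have hLHS : (∫ x, (p x - q x)) = ∫ t in Ioo (0:ℝ) 1, (bfun q t - bfun p t) := by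
    calc (∫ x, (p x - q x)) = ∫ x, (env p x - env q x) := (integral_congr_ae hFGd).symm
      _ = ∫ t in Ioo (0:ℝ) 1, (bfun (env q) t - bfun (env p) t) := heq1
      _ = ∫ t in Ioo (0:ℝ) 1, (bfun q t - bfun p t) := by
          apply setIntegral_congr_fun measurableSet_Ioo
          intro t ht
          simp only [hbfunF t ht, hbfunG t ht]
  have hint2 : IntegrableOn (fun t => bfun q t - bfun p t) (Ioo (0:ℝ) 1) :=
    hint1.congr_fun (fun t ht => by simp only [hbfunF t ht, hbfunG t ht]) measurableSet_Ioo
  -- monotonicity of the b-functions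
  have hmonop : MonotoneOn (bfun p) (Ioo (0:ℝ) 1) := by
    apply bfun_mono
    intro t ht
    obtain ⟨N, M, hgp, _⟩ := profile_GP hpb hpt ht
    exact ⟨N, M, hgp⟩
  have hmonoq : MonotoneOn (bfun q) (Ioo (0:ℝ) 1) := by
    apply bfun_mono
    intro t ht
    obtain ⟨N, M, hgp, _⟩ := profile_GP hqb hqt ht
    exact ⟨N, M, hgp⟩
  -- rearrangements as generalized inverses
  have hre_p : ∀ x, rearr p x = rfun (bfun p) x := by
    intro x
    have h0 : rearr p x = (volume (Tset (bfun p) x)).toReal := rfl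
    rw [h0, vol_Tset hmonop x, ENNReal.toReal_ofReal (rfun_nonneg _ _)]
  have hre_q : ∀ x, rearr q x = rfun (bfun q) x := by
    intro x
    have h0 : rearr q x = (volume (Tset (bfun q) x)).toReal := rfl
    rw [h0, vol_Tset hmonoq x, ENNReal.toReal_ofReal (rfun_nonneg _ _)]
  have hRpmeas : Measurable (rfun (bfun p)) := (rfun_mono _).measurable
  have hRqmeas : Measurable (rfun (bfun q)) := (rfun_mono _).measurable
  have hRp01 : ∀ x, rfun (bfun p) x ∈ Icc (0:ℝ) 1 :=
    fun x => ⟨rfun_nonneg _ _, rfun_le_one _ _⟩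
  have hRq01 : ∀ x, rfun (bfun q) x ∈ Icc (0:ℝ) 1 :=
    fun x => ⟨rfun_nonneg _ _, rfun_le_one _ _⟩
  -- integrability of the difference of rearrangements
  obtain ⟨btp, hbtp_meas, hbtp⟩ := exists_measurable_ext hmonop
  obtain ⟨btq, hbtq_meas, hbtq⟩ := exists_measurable_ext hmonoq
  have hindp := integral_ind_profile hbtp_meas hmonop hbtp
  have hindq := integral_ind_profile hbtq_meas hmonoq hbtq
  set K : ℝ × ℝ → ℝ :=
    fun z => (if btp z.1 < z.2 then (1:ℝ) else 0) - (if btq z.1 < z.2 then (1:ℝ) else 0) with hK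
  have hKmeas : Measurable K := by
    apply Measurable.sub
    · exact Measurable.ite (measurableSet_lt (hbtp_meas.comp measurable_fst) measurable_snd)
        measurable_const measurable_const
    · exact Measurable.ite (measurableSet_lt (hbtq_meas.comp measurable_fst) measurable_snd)
        measurable_const measurable_const
  have hKint : Integrable K (ν.prod volume) := by
    rw [integrable_prod_iff hKmeas.aestronglyMeasurable]
    constructor
    · exact ae_of_all _ fun t => integrable_ind_sub (btp t) (btq t)
    · have hfe : (fun t => ∫ x, ‖K (t, x)‖) = fun t => |btp t - btq t| :=
        funext fun t => integral_norm_ind_sub (btp t) (btq t)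
      rw [hfe]
      exact (hint2.abs).congr ((ae_restrict_iff' measurableSet_Ioo).2
        (ae_of_all _ fun t ht => by simp only [hbtp t ht, hbtq t ht, abs_sub_comm]))
  have hKslice : ∀ x, (∫ t in Ioo (0:ℝ) 1, K (t, x)) = rfun (bfun p) x - rfun (bfun q) x := by
    intro x
    have : (∫ t in Ioo (0:ℝ) 1, K (t, x))
        = ∫ t in Ioo (0:ℝ) 1,
            ((if btp t < x then (1:ℝ) else 0) - (if btq t < x then (1:ℝ) else 0)) := rfl
    rw [this, integral_sub (hindp x).1 (hindq x).1, (hindp x).2, (hindq x).2]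
  have hRint : Integrable (fun x => rfun (bfun p) x - rfun (bfun q) x) := by
    have h3 : Integrable (fun x => ∫ t, (K ∘ Prod.swap) (x, t) ∂ν) volume :=
      (hKint.swap).integral_prod_left
    apply h3.congr
    refine ae_of_all _ fun x => ?_
    exact hKslice x
  have hNM2 : ∀ t ∈ Ioo (0:ℝ) 1,
      ∃ N M, GP (rfun (bfun p)) t N M ∧ GP (rfun (bfun q)) t N M := by
    intro t ht
    exact ⟨min (bfun p t) (bfun q t), max (bfun p ((t+1)/2)) (bfun q ((t+1)/2)),
      (GP_rfun hmonop ht).weaken (min_le_left _ _) (le_max_left _ _),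
      (GP_rfun hmonoq ht).weaken (min_le_right _ _) (le_max_right _ _)⟩
  obtain ⟨heq2, _⟩ := core hRpmeas hRqmeas hRp01 hRq01 hRint hNM2
  -- a.e. identification of the b-functions of the rearrangements
  have hae_p : ∀ᵐ t, t ∈ Ioo (0:ℝ) 1 → bfun (rfun (bfun p)) t = bfun p t := by
    have hnull := gamma_ae hmonop
    rw [ae_iff]
    apply measure_mono_null _ hnull
    intro t ht
    simp only [mem_setOf_eq] at ht ⊢
    push_neg at ht
    exact ⟨ht.1, fun h => ht.2 ((bfun_rfun hmonop ht.1).trans h.symm)⟩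
  have hae_q : ∀ᵐ t, t ∈ Ioo (0:ℝ) 1 → bfun (rfun (bfun q)) t = bfun q t := by
    have hnull := gamma_ae hmonoq
    rw [ae_iff]
    apply measure_mono_null _ hnull
    intro t ht
    simp only [mem_setOf_eq] at ht ⊢
    push_neg at ht
    exact ⟨ht.1, fun h => ht.2 ((bfun_rfun hmonoq ht.1).trans h.symm)⟩
  have hRHSeq : (∫ t in Ioo (0:ℝ) 1, (bfun (rfun (bfun q)) t - bfun (rfun (bfun p)) t))
      = ∫ t in Ioo (0:ℝ) 1, (bfun q t - bfun p t) := by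
    apply setIntegral_congr_ae measurableSet_Ioo
    filter_upwards [hae_p, hae_q] with t hp' hq' ht
    rw [hp' ht, hq' ht]
  calc (∫ x, (p x - q x)) = ∫ t in Ioo (0:ℝ) 1, (bfun q t - bfun p t) := hLHS
    _ = ∫ t in Ioo (0:ℝ) 1, (bfun (rfun (bfun q)) t - bfun (rfun (bfun p)) t) := hRHSeq.symm
    _ = ∫ x, (rfun (bfun p) x - rfun (bfun q) x) := heq2.symm
    _ = ∫ x, (rearr p x - rearr q x) := by
        congr 1
        funext x
        rw [hre_p x, hre_q x]

end
end

section
/- Assume C_w < ∞. Let f, g be nondecreasing right-continuous interpolating profiles each saturated off some finite interval [-K,K]. Then ∫_ℝ (1 - f^w(x)) g(x) dx = ∬_{ℝ²} V(x-y) df(x) dg(y), where df, dg denote the Lebesgue–Stieltjes measures associated with f and g. -/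
open MeasureTheory Filter Set
open scoped ENNReal

noncomputable section

def OmE (w : ℝ → ℝ) (s : ℝ) : ℝ≥0∞ := ∫⁻ z in Iic s, ENNReal.ofReal (w z)
def VE (w : ℝ → ℝ) (t : ℝ) : ℝ≥0∞ := ∫⁻ s in Iic t, OmE w s

theorem cov_lint (h : ℝ → ℝ≥0∞) (hh : Measurable h) (a b : ℝ) :
    ∫⁻ y in Ici b, h (a - y) = ∫⁻ z in Iic (a - b), h z := by
  have hm : Measurable (fun y : ℝ => a - y) := measurable_const.sub measurable_id
  conv_rhs => rw [← Measure.map_sub_left_eq_self (volume : Measure ℝ) a]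
  rw [setLIntegral_map measurableSet_Iic hh hm]
  congr 1
  ext y
  simp [sub_le_sub_iff_left]

variable {w : ℝ → ℝ}

theorem om_nonneg (hw : IsWindow w) (x : ℝ) : 0 ≤ Om w x :=
  setIntegral_nonneg measurableSet_Iic fun z _ => hw.nonneg z

theorem om_mono (hw : IsWindow w) : Monotone (Om w) := fun a b hab =>
  setIntegral_mono_set hw.integrable.integrableOn
    (Eventually.of_forall fun z => hw.nonneg z) (HasSubset.Subset.eventuallyLE (Iic_subset_Iic.2 hab))

theorem om_le_one (hw : IsWindow w) (x : ℝ) : Om w x ≤ 1 := by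
  rw [← hw.normalized]
  exact setIntegral_le_integral hw.integrable (Eventually.of_forall fun z => hw.nonneg z)

theorem om_meas (hw : IsWindow w) : Measurable (Om w) := (om_mono hw).measurable

theorem omE_eq (hw : IsWindow w) (s : ℝ) : ENNReal.ofReal (Om w s) = OmE w s := by
  unfold Om OmE
  rw [ofReal_integral_eq_lintegral_ofReal hw.integrable.integrableOn
    (Eventually.of_forall fun z => hw.nonneg z)]

theorem lint_w_one (hw : IsWindow w) : ∫⁻ z, ENNReal.ofReal (w z) = 1 := by
  rw [← ofReal_integral_eq_lintegral_ofReal hw.integrable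
    (Eventually.of_forall fun z => hw.nonneg z), hw.normalized, ENNReal.ofReal_one]

theorem omE_le_one (hw : IsWindow w) (s : ℝ) : OmE w s ≤ 1 := by
  rw [← lint_w_one hw]
  exact lintegral_mono' Measure.restrict_le_self le_rfl

theorem om_reflect (hw : IsWindow w) (t : ℝ) : Om w t + Om w (-t) = 1 := by
  have h1 : Om w (-t) = ∫ z in Ioi t, w z := by
    unfold Om
    rw [← integral_comp_neg_Ioi]
    simp only [hw.even]
  rw [h1]
  unfold Om
  have := integral_add_compl (measurableSet_Iic (a := t)) hw.integrable
  rw [compl_Iic, hw.normalized] at this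
  exact this
theorem omE_meas (hw : IsWindow w) : Measurable (OmE w) := by
  have h : OmE w = fun s => ENNReal.ofReal (Om w s) := by
    ext s; rw [omE_eq hw]
  rw [h]
  exact (om_meas hw).ennreal_ofReal

theorem VE_lt_top (hw : IsWindow w) (hCw : Integrable (fun x => |x| * w x)) (t : ℝ) :
    VE w t < ∞ := by
  obtain ⟨w', hw'meas, hw'ae⟩ := hw.integrable.aestronglyMeasurable
  have hae : w =ᵐ[volume] w' := hw'ae
  -- step 1 : rewrite VE via w'
  have h1 : VE w t = ∫⁻ s in Iic t,
      ∫⁻ z, ({q : ℝ × ℝ | q.2 ≤ q.1}.indicator (fun q => ENNReal.ofReal (w' q.2)) (s, z)) := by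
    unfold VE OmE
    refine lintegral_congr fun s => ?_
    have : ∫⁻ z in Iic s, ENNReal.ofReal (w z) = ∫⁻ z in Iic s, ENNReal.ofReal (w' z) :=
      lintegral_congr_ae ((ae_restrict_of_ae hae).mono fun z hz => by simp only [hz])
    rw [this, ← lintegral_indicator measurableSet_Iic]
    refine lintegral_congr fun z => ?_
    by_cases hzs : z ≤ s <;> simp [Set.indicator, hzs, Set.mem_Iic]
  have hFmeas : Measurable (fun q : ℝ × ℝ => {q : ℝ × ℝ | q.2 ≤ q.1}.indicator
      (fun q => ENNReal.ofReal (w' q.2)) q) :=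
    Measurable.indicator ((hw'meas.measurable.comp measurable_snd).ennreal_ofReal)
      (measurableSet_le measurable_snd measurable_fst)
  -- step 2 : Tonelli
  have h2 : VE w t = ∫⁻ z, ∫⁻ s in Iic t,
      ({q : ℝ × ℝ | q.2 ≤ q.1}.indicator (fun q => ENNReal.ofReal (w' q.2)) (s, z)) := by
    rw [h1]
    exact lintegral_lintegral_swap hFmeas.aemeasurable
  -- step 3 : compute inner integral
  have h3 : VE w t = ∫⁻ z, ENNReal.ofReal (w' z) * ENNReal.ofReal (t - z) := by
    rw [h2]
    refine lintegral_congr fun z => ?_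
    have : (fun s : ℝ => {q : ℝ × ℝ | q.2 ≤ q.1}.indicator
        (fun q => ENNReal.ofReal (w' q.2)) (s, z))
        = (Ici z).indicator (fun _ => ENNReal.ofReal (w' z)) := by
      ext s
      by_cases hzs : z ≤ s <;> simp [Set.indicator, hzs, Set.mem_Ici]
    rw [this, lintegral_indicator measurableSet_Ici, setLIntegral_const,
      Measure.restrict_apply measurableSet_Ici, Ici_inter_Iic, Real.volume_Icc]
  rw [h3]
  have hb : ∀ᵐ z : ℝ, ENNReal.ofReal (w' z) * ENNReal.ofReal (t - z)
      ≤ ENNReal.ofReal |t| * ENNReal.ofReal (w z) + ENNReal.ofReal (|z| * w z) := by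
    filter_upwards [hae] with z hz
    rw [hz, ENNReal.ofReal_mul (abs_nonneg z)]
    have h4 : ENNReal.ofReal (t - z) ≤ ENNReal.ofReal |t| + ENNReal.ofReal |z| := by
      rw [← ENNReal.ofReal_add (abs_nonneg t) (abs_nonneg z)]
      refine ENNReal.ofReal_le_ofReal ?_
      have h5 := le_abs_self (t - z)
      have h6 := abs_sub t z
      linarith
    calc ENNReal.ofReal (w' z) * ENNReal.ofReal (t - z)
        ≤ ENNReal.ofReal (w' z) * (ENNReal.ofReal |t| + ENNReal.ofReal |z|) :=
          mul_le_mul_right h4 _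
      _ = ENNReal.ofReal |t| * ENNReal.ofReal (w' z)
            + ENNReal.ofReal |z| * ENNReal.ofReal (w' z) := by ring
  have haux : AEMeasurable (fun z : ℝ => ENNReal.ofReal |t| * ENNReal.ofReal (w z)) volume := by
    have h0 : Measurable (fun z : ℝ => ENNReal.ofReal |t| * ENNReal.ofReal (w' z)) :=
      hw'meas.measurable.ennreal_ofReal.const_mul _
    exact h0.aemeasurable.congr (by filter_upwards [hae] with z hz; simp [hz])
  calc ∫⁻ z, ENNReal.ofReal (w' z) * ENNReal.ofReal (t - z)
      ≤ ∫⁻ z, (ENNReal.ofReal |t| * ENNReal.ofReal (w z) + ENNReal.ofReal (|z| * w z)) :=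
        lintegral_mono_ae hb
    _ = ENNReal.ofReal |t| * (∫⁻ z, ENNReal.ofReal (w z)) + ∫⁻ z, ENNReal.ofReal (|z| * w z) := by
        rw [lintegral_add_left' haux, lintegral_const_mul' _ _ ENNReal.ofReal_ne_top]
    _ < ∞ := by
        rw [lint_w_one hw, mul_one,
          ← ofReal_integral_eq_lintegral_ofReal hCw
            (Eventually.of_forall fun z => mul_nonneg (abs_nonneg z) (hw.nonneg z))]
        exact ENNReal.add_lt_top.2 ⟨ENNReal.ofReal_lt_top, ENNReal.ofReal_lt_top⟩

theorem om_integrableOn (hw : IsWindow w) (hCw : Integrable (fun x => |x| * w x)) (t : ℝ) :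
    IntegrableOn (Om w) (Iic t) := by
  refine ⟨(om_meas hw).aestronglyMeasurable, ?_⟩
  rw [hasFiniteIntegral_iff_ofReal (Eventually.of_forall fun s => om_nonneg hw s)]
  calc ∫⁻ s in Iic t, ENNReal.ofReal (Om w s) = VE w t :=
        lintegral_congr fun s => omE_eq hw s
    _ < ∞ := VE_lt_top hw hCw t

theorem vker_eq (hw : IsWindow w) (hCw : Integrable (fun x => |x| * w x)) (t : ℝ) :
    ENNReal.ofReal (Vker w t) = VE w t := by
  unfold Vker
  rw [ofReal_integral_eq_lintegral_ofReal (om_integrableOn hw hCw t)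
    (Eventually.of_forall fun s => om_nonneg hw s)]
  exact lintegral_congr fun s => omE_eq hw s

theorem vker_nonneg (hw : IsWindow w) (t : ℝ) : 0 ≤ Vker w t :=
  setIntegral_nonneg measurableSet_Iic fun s _ => om_nonneg hw s

theorem vker_mono (hw : IsWindow w) (hCw : Integrable (fun x => |x| * w x)) :
    Monotone (Vker w) := fun a b hab =>
  setIntegral_mono_set (om_integrableOn hw hCw b)
    (Eventually.of_forall fun s => om_nonneg hw s)
    (HasSubset.Subset.eventuallyLE (Iic_subset_Iic.2 hab))

theorem vker_meas (hw : IsWindow w) (hCw : Integrable (fun x => |x| * w x)) :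
    Measurable (Vker w) := (vker_mono hw hCw).measurable

theorem VE_mono (hw : IsWindow w) : Monotone (VE w) := fun a b hab =>
  lintegral_mono_set (Iic_subset_Iic.2 hab)

-- Lemma A : ∫⁻ x in Ici b, (1 - OmE (x - a)) dx = VE (a - b)
theorem lemA (hw : IsWindow w) (a b : ℝ) :
    ∫⁻ x in Ici b, (1 - OmE w (x - a)) = VE w (a - b) := by
  have hpt : ∀ x : ℝ, 1 - OmE w (x - a) = OmE w (a - x) := by
    intro x
    rw [← omE_eq hw, ← omE_eq hw]
    have hr := om_reflect hw (x - a)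
    have : Om w (a - x) = 1 - Om w (x - a) := by
      have : -(x - a) = a - x := by ring
      linarith [hr, this ▸ hr]
    rw [this, ENNReal.ofReal_sub _ (om_nonneg hw _), ENNReal.ofReal_one]
  calc ∫⁻ x in Ici b, (1 - OmE w (x - a)) = ∫⁻ x in Ici b, OmE w (a - x) :=
        lintegral_congr fun x => hpt x
    _ = VE w (a - b) := cov_lint (OmE w) (omE_meas hw) a b

theorem sat_eq_one {p : ℝ → ℝ} {K : ℝ} (hrc : ContinuousWithinAt p (Ici K) K)
    (hs : ∀ x, K < x → p x = 1) : p K = 1 := by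
  have h1 : Tendsto p (nhdsWithin K (Ioi K)) (nhds (p K)) :=
    hrc.tendsto.mono_left (nhdsWithin_mono _ Ioi_subset_Ici_self)
  have h2 : Tendsto p (nhdsWithin K (Ioi K)) (nhds 1) := by
    refine Tendsto.congr' ?_ tendsto_const_nhds
    filter_upwards [self_mem_nhdsWithin] with x hx
    exact (hs x hx).symm
  exact tendsto_nhds_unique h1 h2

theorem stieltjes_supp {p : ℝ → ℝ} {K : ℝ} (P : StieltjesFunction ℝ) (hP : ⇑P = p)
    (hbot : Tendsto p atBot (nhds 0)) (htop : Tendsto p atTop (nhds 1))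
    (hrc : ContinuousWithinAt p (Ici K) K)
    (hs : Saturated p K) : P.measure (Icc (-K) K)ᶜ = 0 := by
  haveI : IsProbabilityMeasure P.measure :=
    P.isProbabilityMeasure (hP ▸ hbot) (hP ▸ htop)
  have hIic : ∀ x, P.measure (Iic x) = ENNReal.ofReal (p x) := by
    intro x
    rw [P.measure_Iic (hP ▸ hbot), hP, sub_zero]
  have h1 : P.measure (Iio (-K)) = 0 := by
    have hsub : Iio (-K) ⊆ ⋃ n : ℕ, Iic (-K - ((n:ℝ) + 1)⁻¹) := by
      intro x hx
      simp only [mem_Iio] at hx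
      obtain ⟨n, hn⟩ := exists_nat_gt (-K - x)⁻¹
      refine mem_iUnion.2 ⟨n, ?_⟩
      simp only [mem_Iic]
      have hpos : 0 < -K - x := by linarith
      have hn' : (-K - x)⁻¹ < (n:ℝ) + 1 := by linarith
      have : ((n:ℝ) + 1)⁻¹ < -K - x := by
        rw [inv_lt_comm₀ (by positivity) hpos]
        exact hn'
      linarith
    refine le_antisymm (le_trans (measure_mono hsub) ?_) zero_le
    refine le_trans (measure_iUnion_le _) ?_
    have : ∀ n : ℕ, P.measure (Iic (-K - ((n:ℝ) + 1)⁻¹)) = 0 := by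
      intro n
      have hlt : -K - ((n:ℝ) + 1)⁻¹ < -K := by
        have : (0:ℝ) < ((n:ℝ) + 1)⁻¹ := by positivity
        linarith
      rw [hIic, hs.1 _ hlt, ENNReal.ofReal_zero]
    simp [this]
  have h2 : P.measure (Ioi K) = 0 := by
    have : Ioi K = (Iic K)ᶜ := compl_Iic.symm
    rw [this, measure_compl measurableSet_Iic (measure_ne_top _ _), hIic,
      sat_eq_one hrc hs.2, ENNReal.ofReal_one, measure_univ, tsub_self]
  have : (Icc (-K) K)ᶜ ⊆ Iio (-K) ∪ Ioi K := by
    intro x hx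
    simp only [mem_compl_iff, mem_Icc, not_and_or, not_le] at hx
    rcases hx with hx | hx
    · exact Or.inl hx
    · exact Or.inr hx
  exact le_antisymm (le_trans (measure_mono this)
    (le_trans (measure_union_le _ _) (by rw [h1, h2, add_zero]))) zero_le
theorem key (w f g : ℝ → ℝ) (K : ℝ)
    (hw : IsWindow w) (hwm : Measurable w) (hCw : Integrable (fun x => |x| * w x))
    (hfp : IsProfile f) (hgp : IsProfile g)
    (hfm : Monotone f) (hgm : Monotone g)
    (hfrc : ∀ x, ContinuousWithinAt f (Ici x) x)
    (hgrc : ∀ x, ContinuousWithinAt g (Ici x) x)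
    (hfs : Saturated f K) (hgs : Saturated g K) :
    ∫ x : ℝ, (1 - convw f w x) * g x =
      ∫ x : ℝ, (∫ y : ℝ, Vker w (x - y)
          ∂((⟨g, hgm, hgrc⟩ : StieltjesFunction ℝ).measure))
        ∂((⟨f, hfm, hfrc⟩ : StieltjesFunction ℝ).measure) := by
  set F : StieltjesFunction ℝ := ⟨f, hfm, hfrc⟩ with hF
  set G : StieltjesFunction ℝ := ⟨g, hgm, hgrc⟩ with hG
  set μ := F.measure
  set ν := G.measure
  have hFf : ⇑F = f := rfl
  have hGg : ⇑G = g := rfl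
  haveI hμP : IsProbabilityMeasure μ := F.isProbabilityMeasure (hFf ▸ hfp.2.1) (hFf ▸ hfp.2.2)
  haveI hνP : IsProbabilityMeasure ν := G.isProbabilityMeasure (hGg ▸ hgp.2.1) (hGg ▸ hgp.2.2)
  have hμIic : ∀ y, μ (Iic y) = ENNReal.ofReal (f y) := by
    intro y; rw [F.measure_Iic (hFf ▸ hfp.2.1), hFf, sub_zero]
  have hνIic : ∀ y, ν (Iic y) = ENNReal.ofReal (g y) := by
    intro y; rw [G.measure_Iic (hGg ▸ hgp.2.1), hGg, sub_zero]
  have hf0 : ∀ y, 0 ≤ f y := fun y => (hfp.1 y).1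
  have hg0 : ∀ y, 0 ≤ g y := fun y => (hgp.1 y).1
  have hWm : Measurable (fun z => ENNReal.ofReal (w z)) := hwm.ennreal_ofReal
  have homE : Measurable (OmE w) := omE_meas hw
  -- convolution identity
  have h_conv : ∀ x, ENNReal.ofReal (convw f w x) = ∫⁻ x', OmE w (x - x') ∂μ := by
    intro x
    have hwx : Integrable (fun y => w (x - y)) := (integrable_comp_sub_left w x).2 hw.integrable
    have hInt : Integrable (fun y => f y * w (x - y)) := by
      refine hwx.mono' (hfm.measurable.aestronglyMeasurable.mul hwx.aestronglyMeasurable) ?_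
      refine Eventually.of_forall fun y => ?_
      rw [Real.norm_eq_abs, abs_mul, abs_of_nonneg (hf0 y), abs_of_nonneg (hw.nonneg _)]
      exact mul_le_of_le_one_left (hw.nonneg _) (hfp.1 y).2
    unfold convw
    rw [ofReal_integral_eq_lintegral_ofReal hInt
      (Eventually.of_forall fun y => mul_nonneg (hf0 y) (hw.nonneg _))]
    have hset : MeasurableSet {q : ℝ × ℝ | q.2 ≤ q.1} := measurableSet_le measurable_snd measurable_fst
    have hFun : Measurable (fun q : ℝ × ℝ => {q : ℝ × ℝ | q.2 ≤ q.1}.indicator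
        (fun q => ENNReal.ofReal (w (x - q.1))) q) :=
      Measurable.indicator (hWm.comp (measurable_const.sub measurable_fst)) hset
    calc ∫⁻ y, ENNReal.ofReal (f y * w (x - y))
        = ∫⁻ y, ∫⁻ x', {q : ℝ × ℝ | q.2 ≤ q.1}.indicator
            (fun q => ENNReal.ofReal (w (x - q.1))) (y, x') ∂μ := by
          refine lintegral_congr fun y => ?_
          have hpt : (fun x' => {q : ℝ × ℝ | q.2 ≤ q.1}.indicator
              (fun q => ENNReal.ofReal (w (x - q.1))) (y, x'))
              = (Iic y).indicator (fun _ => ENNReal.ofReal (w (x - y))) := by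
            ext x'
            by_cases h : x' ≤ y <;> simp [Set.indicator, h, Set.mem_Iic]
          rw [hpt, lintegral_indicator_const measurableSet_Iic, hμIic y,
            ENNReal.ofReal_mul (hf0 y), mul_comm]
      _ = ∫⁻ x', ∫⁻ y, {q : ℝ × ℝ | q.2 ≤ q.1}.indicator
            (fun q => ENNReal.ofReal (w (x - q.1))) (y, x') ∂volume ∂μ :=
          lintegral_lintegral_swap hFun.aemeasurable
      _ = ∫⁻ x', OmE w (x - x') ∂μ := by
          refine lintegral_congr fun x' => ?_
          have hpt : (fun y => {q : ℝ × ℝ | q.2 ≤ q.1}.indicator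
              (fun q => ENNReal.ofReal (w (x - q.1))) (y, x'))
              = (Ici x').indicator (fun y => ENNReal.ofReal (w (x - y))) := by
            ext y
            by_cases h : x' ≤ y <;> simp [Set.indicator, h, Set.mem_Ici]
          rw [hpt, lintegral_indicator measurableSet_Ici]
          exact cov_lint (fun z => ENNReal.ofReal (w z)) hWm x x'
  have h_conv0 : ∀ x, 0 ≤ convw f w x := fun x =>
    integral_nonneg fun y => mul_nonneg (hf0 y) (hw.nonneg _)
  have h_conv1 : ∀ x, convw f w x ≤ 1 := by
    intro x
    rw [← ENNReal.ofReal_le_one]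
    · rw [h_conv x]
      calc ∫⁻ x', OmE w (x - x') ∂μ ≤ ∫⁻ _, 1 ∂μ := lintegral_mono fun x' => omE_le_one hw _
        _ = 1 := by simp
  have homEc : ∀ a, Measurable (fun x' : ℝ => OmE w (a - x')) := fun a =>
    homE.comp (measurable_const.sub measurable_id)
  have h_sub : ∀ x, ∫⁻ x', (1 - OmE w (x - x')) ∂μ = 1 - ∫⁻ x', OmE w (x - x') ∂μ := by
    intro x
    rw [lintegral_sub (homEc x) ?_ (Eventually.of_forall fun x' => omE_le_one hw _)]
    · simp
    · refine ne_of_lt (lt_of_le_of_lt (lintegral_mono fun x' => omE_le_one hw _) ?_)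
      simp
  -- the pointwise identity for the LHS integrand
  have h_ind : ∀ x, ENNReal.ofReal ((1 - convw f w x) * g x)
      = (∫⁻ x', (1 - OmE w (x - x')) ∂μ) * ν (Iic x) := by
    intro x
    rw [ENNReal.ofReal_mul (by linarith [h_conv1 x]), hνIic x, h_sub x,
      ENNReal.ofReal_sub _ (h_conv0 x), ENNReal.ofReal_one, h_conv x]
  -- measurability pieces
  have hgmeas : Measurable g := hgm.measurable
  have hνIicMeas : Measurable (fun x => ν (Iic x)) := by
    have h : (fun x => ν (Iic x)) = fun x => ENNReal.ofReal (g x) := funext hνIic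
    rw [h]; exact hgmeas.ennreal_ofReal
  have hset : MeasurableSet {q : ℝ × ℝ | q.2 ≤ q.1} :=
    measurableSet_le measurable_snd measurable_fst
  have hsub_meas : Measurable (fun p : ℝ × ℝ => 1 - OmE w (p.1 - p.2)) :=
    (homE.comp (measurable_fst.sub measurable_snd)).const_sub 1
  have homE_top : ∀ a b : ℝ, 1 - OmE w (a - b) ≠ ⊤ := by
    intro a b
    exact ne_of_lt (lt_of_le_of_lt tsub_le_self ENNReal.one_lt_top)
  -- the big chain : A = B
  have hAB : (∫⁻ x, (∫⁻ x', (1 - OmE w (x - x')) ∂μ) * ν (Iic x))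
      = ∫⁻ x', (∫⁻ y', VE w (x' - y') ∂ν) ∂μ := by
    calc ∫⁻ x, (∫⁻ x', (1 - OmE w (x - x')) ∂μ) * ν (Iic x)
        = ∫⁻ x, ∫⁻ x', (1 - OmE w (x - x')) * ν (Iic x) ∂μ := by
          refine lintegral_congr fun x => ?_
          exact (lintegral_mul_const' _ _ (measure_ne_top ν _)).symm
      _ = ∫⁻ x', ∫⁻ x, (1 - OmE w (x - x')) * ν (Iic x) ∂volume ∂μ := by
          refine lintegral_lintegral_swap ?_
          exact (hsub_meas.mul (hνIicMeas.comp measurable_fst)).aemeasurable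
      _ = ∫⁻ x', (∫⁻ y', VE w (x' - y') ∂ν) ∂μ := by
          refine lintegral_congr fun x' => ?_
          calc ∫⁻ x, (1 - OmE w (x - x')) * ν (Iic x)
              = ∫⁻ x, ∫⁻ y', (1 - OmE w (x - x'))
                  * {q : ℝ × ℝ | q.2 ≤ q.1}.indicator (fun _ => (1:ℝ≥0∞)) (x, y') ∂ν := by
                refine lintegral_congr fun x => ?_
                rw [lintegral_const_mul' _ _ (homE_top x x')]
                congr 1
                have hpt : (fun y' => {q : ℝ × ℝ | q.2 ≤ q.1}.indicator
                    (fun _ => (1:ℝ≥0∞)) (x, y'))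
                    = (Iic x).indicator (fun _ => (1:ℝ≥0∞)) := by
                  ext y'
                  by_cases h : y' ≤ x <;> simp [Set.indicator, h, Set.mem_Iic]
                rw [hpt, lintegral_indicator_const measurableSet_Iic, one_mul]
            _ = ∫⁻ y', ∫⁻ x, (1 - OmE w (x - x'))
                  * {q : ℝ × ℝ | q.2 ≤ q.1}.indicator (fun _ => (1:ℝ≥0∞)) (x, y') ∂volume ∂ν := by
                refine lintegral_lintegral_swap ?_
                refine Measurable.aemeasurable ?_
                exact ((homE.comp ((measurable_fst.sub measurable_const))).const_sub 1).mul
                  (measurable_const.indicator hset)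
            _ = ∫⁻ y', VE w (x' - y') ∂ν := by
                refine lintegral_congr fun y' => ?_
                have hpt : (fun x => (1 - OmE w (x - x'))
                    * {q : ℝ × ℝ | q.2 ≤ q.1}.indicator (fun _ => (1:ℝ≥0∞)) (x, y'))
                    = (Ici y').indicator (fun x => 1 - OmE w (x - x')) := by
                  ext x
                  by_cases h : y' ≤ x <;> simp [Set.indicator, h, Set.mem_Ici]
                rw [hpt, lintegral_indicator measurableSet_Ici]
                exact lemA hw x' y'
  -- supports
  have hνsupp : ∀ᵐ y' ∂ν, y' ∈ Icc (-K) K := by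
    have h0 := stieltjes_supp G hGg hgp.2.1 hgp.2.2 (hgrc K) hgs
    rw [ae_iff]
    exact h0
  have hμsupp : ∀ᵐ x' ∂μ, x' ∈ Icc (-K) K := by
    have h0 := stieltjes_supp F hFf hfp.2.1 hfp.2.2 (hfrc K) hfs
    rw [ae_iff]
    exact h0
  -- RHS conversion
  have hVmeas : Measurable (Vker w) := vker_meas hw hCw
  have hVEmeas : Measurable (VE w) := by
    have h : VE w = fun t => ENNReal.ofReal (Vker w t) := funext fun t => (vker_eq hw hCw t).symm
    rw [h]; exact hVmeas.ennreal_ofReal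
  have hInnerMeas : Measurable (fun x' => ∫⁻ y', VE w (x' - y') ∂ν) :=
    Measurable.lintegral_prod_right (f := fun x' y' => VE w (x' - y'))
      (hVEmeas.comp (measurable_fst.sub measurable_snd))
  have hInnerEq : ∀ x', ∫ y', Vker w (x' - y') ∂ν = (∫⁻ y', VE w (x' - y') ∂ν).toReal := by
    intro x'
    have hm : Measurable (fun y' : ℝ => Vker w (x' - y')) :=
      hVmeas.comp (measurable_const.sub measurable_id)
    rw [integral_eq_lintegral_of_nonneg_ae (Eventually.of_forall fun y' => vker_nonneg hw _)
      hm.aestronglyMeasurable]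
    congr 1
    exact lintegral_congr fun y' => vker_eq hw hCw _
  have hInnerFin : ∀ᵐ x' ∂μ, (∫⁻ y', VE w (x' - y') ∂ν) < ⊤ := by
    filter_upwards [hμsupp] with x' hx'
    calc ∫⁻ y', VE w (x' - y') ∂ν ≤ ∫⁻ _, VE w (2*K) ∂ν := by
          refine lintegral_mono_ae ?_
          filter_upwards [hνsupp] with y' hy'
          exact VE_mono hw (by linarith [hx'.2, hy'.1])
      _ = VE w (2*K) := by simp
      _ < ⊤ := VE_lt_top hw hCw _
  have hRHS : ∫ x', (∫ y', Vker w (x' - y') ∂ν) ∂μ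
      = (∫⁻ x', (∫⁻ y', VE w (x' - y') ∂ν) ∂μ).toReal := by
    rw [show (fun x' => ∫ y', Vker w (x' - y') ∂ν)
        = fun x' => (∫⁻ y', VE w (x' - y') ∂ν).toReal from funext hInnerEq]
    exact integral_toReal hInnerMeas.aemeasurable hInnerFin
  have hLHSmeas : Measurable (fun x => (1 - convw f w x) * g x) := by
    have hc : Measurable (fun x => convw f w x) := by
      have h : (fun x => convw f w x) = fun x => (∫⁻ x', OmE w (x - x') ∂μ).toReal := by
        ext x; rw [← h_conv x, ENNReal.toReal_ofReal (h_conv0 x)]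
      rw [h]
      exact (Measurable.lintegral_prod_right (f := fun x x' => OmE w (x - x'))
        (homE.comp (measurable_fst.sub measurable_snd))).ennreal_toReal
    exact (hc.const_sub 1).mul hgmeas
  have hLHS : ∫ x, (1 - convw f w x) * g x
      = (∫⁻ x, (∫⁻ x', (1 - OmE w (x - x')) ∂μ) * ν (Iic x)).toReal := by
    rw [integral_eq_lintegral_of_nonneg_ae
      (Eventually.of_forall fun x => mul_nonneg (by linarith [h_conv1 x]) (hg0 x))
      hLHSmeas.aestronglyMeasurable]
    congr 1
    exact lintegral_congr h_ind
  rw [hLHS, hRHS, hAB]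

/-- Assume `C_w < ∞`. For nondecreasing right-continuous interpolating
profiles `f, g`, each saturated off some finite interval,
`∫ (1 - f^w) g = ∬ V(x-y) df(x) dg(y)` with the Lebesgue–Stieltjes measures of `f, g`. -/
theorem stmt12 (w f g : ℝ → ℝ) (K : ℝ)
    (hw : IsWindow w) (hCw : Integrable (fun x => |x| * w x))
    (hfp : IsProfile f) (hgp : IsProfile g)
    (hfm : Monotone f) (hgm : Monotone g)
    (hfrc : ∀ x, ContinuousWithinAt f (Ici x) x)
    (hgrc : ∀ x, ContinuousWithinAt g (Ici x) x)
    (hfs : Saturated f K) (hgs : Saturated g K) :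
    ∫ x : ℝ, (1 - convw f w x) * g x =
      ∫ x : ℝ, (∫ y : ℝ, Vker w (x - y)
          ∂((⟨g, hgm, hgrc⟩ : StieltjesFunction ℝ).measure))
        ∂((⟨f, hfm, hfrc⟩ : StieltjesFunction ℝ).measure) := by
  obtain ⟨w', hw'm, hw'ae⟩ := hw.integrable.aestronglyMeasurable
  obtain ⟨M, hM⟩ := hw.bounded
  set w₀ : ℝ → ℝ := fun x => max (min ((w' x + w' (-x))/2) M) 0 with hw₀def
  have hwneg : (fun x : ℝ => w (-x)) =ᵐ[volume] fun x : ℝ => w' (-x) :=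
    hw'ae.comp_tendsto
      ((Measure.measurePreserving_neg (volume : Measure ℝ)).quasiMeasurePreserving.tendsto_ae)
  have hae : w =ᵐ[volume] w₀ := by
    filter_upwards [hw'ae, hwneg] with x h1 h2
    simp only [hw₀def]
    rw [← h1, ← h2, hw.even x]
    have : (w x + w x)/2 = w x := by ring
    rw [this, min_eq_left (hM x), max_eq_left (hw.nonneg x)]
  have hw₀m : Measurable w₀ :=
    ((((hw'm.measurable).add (hw'm.measurable.comp measurable_neg)).div_const 2).min
      measurable_const).max measurable_const
  have hw₀ : IsWindow w₀ := by
    refine ⟨fun x => le_max_right _ _, ?_, ⟨max M 0, fun x => max_le_max (min_le_right _ _) le_rfl⟩,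
      hw.integrable.congr hae, ?_⟩
    · intro x
      simp only [hw₀def, neg_neg]
      rw [add_comm]
    · rw [← integral_congr_ae hae, hw.normalized]
  have hCw₀ : Integrable (fun x => |x| * w₀ x) :=
    hCw.congr (by filter_upwards [hae] with x hx; rw [hx])
  have hconv_eq : ∀ x, convw f w x = convw f w₀ x := by
    intro x
    have hsub : (fun y : ℝ => w (x - y)) =ᵐ[volume] fun y : ℝ => w₀ (x - y) :=
      hae.comp_tendsto
        ((Measure.measurePreserving_sub_left (volume : Measure ℝ) x).quasiMeasurePreserving.tendsto_ae)
    exact integral_congr_ae (hsub.mono fun y hy => by simp only [] at hy ⊢; rw [hy])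
  have hOm_eq : Om w = Om w₀ := funext fun s => integral_congr_ae (ae_restrict_of_ae hae)
  have hV_eq : Vker w = Vker w₀ := funext fun t => by unfold Vker; rw [hOm_eq]
  have hLfun : (fun x => (1 - convw f w x) * g x) = fun x => (1 - convw f w₀ x) * g x :=
    funext fun x => by rw [hconv_eq x]
  rw [hLfun, hV_eq]
  exact key w₀ f g K hw₀ hw₀m hCw₀ hfp hgp hfm hgm hfrc hgrc hfs hgs


end
end

section
/- Assume C_w < ∞. For any nondecreasing bounded function h : ℝ → ℝ with limits h(-∞) at -∞ and h(+∞) at +∞, one has ∫_ℝ |h^w(x) - h(x)| dx ≤ C_w · (h(+∞) - h(-∞)). -/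
open MeasureTheory Filter Set
open scoped ENNReal

noncomputable section

section Aux19
open MeasureTheory

variable {h : ℝ → ℝ} {a b : ℝ}

lemma aux19_interval_bound (hm : Monotone h) (hab : ∀ x, a ≤ h x ∧ h x ≤ b)
    {t : ℝ} (ht : 0 ≤ t) (n : ℝ) :
    (∫ x in (-n)..n, (h x - h (x - t))) ≤ t * (b - a) := by
  have hm' : Monotone (fun x => h (x - t)) := fun x y hxy => hm (by linarith)
  have hII : ∀ u v : ℝ, IntervalIntegrable h volume u v := fun u v =>
    (hm.monotoneOn _).intervalIntegrable
  have hII' : ∀ u v : ℝ, IntervalIntegrable (fun x => h (x - t)) volume u v := fun u v =>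
    (hm'.monotoneOn _).intervalIntegrable
  rw [intervalIntegral.integral_sub (hII _ _) (hII' _ _),
    intervalIntegral.integral_comp_sub_right h t]
  have h1 : (∫ x in (-n)..(n - t), h x) + (∫ x in (n - t)..n, h x) = ∫ x in (-n)..n, h x :=
    intervalIntegral.integral_add_adjacent_intervals (hII _ _) (hII _ _)
  have h2 : (∫ x in (-n - t)..(-n), h x) + (∫ x in (-n)..(n - t), h x)
      = ∫ x in (-n - t)..(n - t), h x :=
    intervalIntegral.integral_add_adjacent_intervals (hII _ _) (hII _ _)
  have hb1 : (∫ x in (n - t)..n, h x) ≤ t * b := by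
    have := intervalIntegral.integral_mono_on (by linarith : n - t ≤ n) (hII _ _)
      (intervalIntegrable_const) (fun x _ => (hab x).2)
    simpa [smul_eq_mul, sub_sub_cancel] using this
  have hb2 : t * a ≤ (∫ x in (-n - t)..(-n), h x) := by
    have := intervalIntegral.integral_mono_on (by linarith : -n - t ≤ -n)
      (intervalIntegrable_const) (hII _ _) (fun x _ => (hab x).1)
    have h' : (-n - (-n - t)) * a = t * a := by ring_nf
    simpa [smul_eq_mul, h'] using this
  nlinarith [hb1, hb2, h1, h2]

lemma aux19_key_shift (hm : Monotone h) (hab : ∀ x, a ≤ h x ∧ h x ≤ b)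
    {t : ℝ} (ht : 0 ≤ t) :
    (∫⁻ x : ℝ, ENNReal.ofReal (h x - h (x - t))) ≤ ENNReal.ofReal (t * (b - a)) := by
  set g : ℝ → ℝ := fun x => h x - h (x - t) with hgdef
  have hgmeas : Measurable g :=
    hm.measurable.sub (hm.measurable.comp (measurable_id.sub_const t))
  have hgnn : ∀ x, 0 ≤ g x := fun x => sub_nonneg.2 (hm (by linarith))
  have hgbd : ∀ x, g x ≤ b - a := fun x => sub_le_sub (hab x).2 (hab _).1
  set F : ℕ → ℝ → ℝ≥0∞ :=
    fun n => (Icc (-(n:ℝ)) n).indicator (fun x => ENNReal.ofReal (g x)) with hFdef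
  have hFmeas : ∀ n, Measurable (F n) := fun n =>
    (hgmeas.ennreal_ofReal).indicator measurableSet_Icc
  have hFmono : Monotone F := by
    intro n m hnm x
    refine Set.indicator_le_indicator_of_subset (Icc_subset_Icc ?_ ?_) (fun _ => zero_le) x
    · exact neg_le_neg (by exact_mod_cast hnm)
    · exact_mod_cast hnm
  have hFsup : ∀ x, (⨆ n, F n x) = ENNReal.ofReal (g x) := by
    intro x
    refine le_antisymm (iSup_le fun n => Set.indicator_le_self _ _ x) ?_
    refine le_iSup_of_le ⌈|x|⌉₊ ?_
    have hx : x ∈ Icc (-(⌈|x|⌉₊:ℝ)) ⌈|x|⌉₊ := by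
      constructor
      · nlinarith [Nat.le_ceil |x|, neg_abs_le x]
      · nlinarith [Nat.le_ceil |x|, le_abs_self x]
    rw [hFdef]; simp [Set.indicator_of_mem hx]
  have hbound : ∀ n : ℕ, (∫⁻ x, F n x) ≤ ENNReal.ofReal (t * (b - a)) := by
    intro n
    have hfin : IntegrableOn g (Icc (-(n:ℝ)) n) := by
      refine Measure.integrableOn_of_bounded (M := b - a) (by simp) hgmeas.aestronglyMeasurable ?_
      exact ae_of_all _ fun x => by
        rw [Real.norm_eq_abs, abs_of_nonneg (hgnn x)]; exact hgbd x
    rw [hFdef]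
    rw [lintegral_indicator measurableSet_Icc,
      ← ofReal_integral_eq_lintegral_ofReal hfin (ae_of_all _ hgnn)]
    refine ENNReal.ofReal_le_ofReal ?_
    rcases le_or_gt (-(n:ℝ)) n with hle | hlt
    · rw [integral_Icc_eq_integral_Ioc, ← intervalIntegral.integral_of_le hle]
      exact aux19_interval_bound hm hab ht n
    · rw [Set.Icc_eq_empty (not_le.2 hlt)]
      simp only [Measure.restrict_empty, integral_zero_measure]
      exact mul_nonneg ht (by linarith [(hab 0).1, (hab 0).2])
  calc (∫⁻ x, ENNReal.ofReal (g x)) = ∫⁻ x, ⨆ n, F n x := by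
        refine lintegral_congr fun x => (hFsup x).symm
    _ = ⨆ n, ∫⁻ x, F n x := lintegral_iSup hFmeas hFmono
    _ ≤ ENNReal.ofReal (t * (b - a)) := iSup_le hbound

lemma aux19_key_abs (hm : Monotone h) (hab : ∀ x, a ≤ h x ∧ h x ≤ b) (z : ℝ) :
    (∫⁻ x : ℝ, ENNReal.ofReal |h (x - z) - h x|) ≤ ENNReal.ofReal (|z| * (b - a)) := by
  rcases le_or_gt 0 z with hz | hz
  · have he : ∀ x : ℝ, |h (x - z) - h x| = h x - h (x - z) := fun x => by
      rw [abs_sub_comm]; exact abs_of_nonneg (sub_nonneg.2 (hm (by linarith)))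
    simp_rw [he]
    rw [abs_of_nonneg hz]
    exact aux19_key_shift hm hab hz
  · set t : ℝ := -z with htdef
    have ht : 0 ≤ t := by simp [htdef]; linarith
    have he : ∀ x : ℝ, ENNReal.ofReal |h (x - z) - h x|
        = (fun y => ENNReal.ofReal (h y - h (y - t))) (x - z) := fun x => by
      simp only [htdef, sub_neg_eq_add, sub_add_cancel]
      congr 1
      exact abs_of_nonneg (sub_nonneg.2 (hm (by linarith)))
    calc (∫⁻ x : ℝ, ENNReal.ofReal |h (x - z) - h x|)
        = ∫⁻ x : ℝ, (fun y => ENNReal.ofReal (h y - h (y - t))) (x - z) :=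
          lintegral_congr he
      _ = ∫⁻ y : ℝ, ENNReal.ofReal (h y - h (y - t)) :=
          lintegral_sub_right_eq_self (fun y => ENNReal.ofReal (h y - h (y - t))) z
      _ ≤ ENNReal.ofReal (t * (b - a)) := aux19_key_shift hm hab ht
      _ = ENNReal.ofReal (|z| * (b - a)) := by rw [abs_of_neg hz]

end Aux19

/-- Assume `C_w < ∞`. For any nondecreasing bounded `h : ℝ → ℝ` with limits
`a` at `-∞` and `b` at `+∞`, one has `∫ |h^w(x) - h(x)| dx ≤ C_w (b - a)`
(the left-hand side valued in `[0,∞]`). -/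
theorem stmt19 (w h : ℝ → ℝ) (a b : ℝ)
    (hw : IsWindow w) (hCw : Integrable (fun x => |x| * w x))
    (hm : Monotone h)
    (hbot : Tendsto h atBot (nhds a)) (htop : Tendsto h atTop (nhds b)) :
    (∫⁻ x : ℝ, ENNReal.ofReal |convw h w x - h x|) ≤
      ENNReal.ofReal ((∫ x : ℝ, |x| * w x) * (b - a)) := by
  have hab : ∀ x, a ≤ h x ∧ h x ≤ b := by
    intro x
    constructor
    · exact le_of_tendsto hbot (Filter.eventually_atBot.2 ⟨x, fun y hy => hm hy⟩)
    · exact ge_of_tendsto htop (Filter.eventually_atTop.2 ⟨x, fun y hy => hm hy⟩)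
  have hba : a ≤ b := le_trans (hab 0).1 (hab 0).2
  have hmeas : Measurable h := hm.measurable
  set M : ℝ := max |a| |b| with hMdef
  have hM : ∀ y, ‖h y‖ ≤ M := by
    intro y
    rw [Real.norm_eq_abs, abs_le]
    constructor
    · calc -M ≤ -|a| := by simp [hMdef]
        _ ≤ a := neg_abs_le a
        _ ≤ h y := (hab y).1
    · calc h y ≤ b := (hab y).2
        _ ≤ |b| := le_abs_self b
        _ ≤ M := le_max_right _ _
  -- pointwise bound
  have step1 : ∀ x : ℝ, ENNReal.ofReal |convw h w x - h x|
      ≤ ∫⁻ z, ENNReal.ofReal (|h (x - z) - h x| * w z) := by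
    intro x
    have hint1 : Integrable (fun z => h (x - z) * w z) :=
      hw.integrable.bdd_mul (c := M)
        ((hmeas.comp (measurable_const.sub measurable_id)).aestronglyMeasurable)
        (ae_of_all _ fun z => hM _)
    have hint2 : Integrable (fun z => h x * w z) := hw.integrable.const_mul _
    have hconv : convw h w x = ∫ z, h (x - z) * w z := by
      have := integral_sub_left_eq_self (fun y => h y * w (x - y)) volume x
      simp only [sub_sub_cancel] at this
      exact this.symm
    have hx1 : h x = ∫ z, h x * w z := by
      rw [integral_const_mul, hw.normalized, mul_one]
    have hdiff : convw h w x - h x = ∫ z, (h (x - z) - h x) * w z := by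
      rw [hconv, hx1, ← integral_sub hint1 hint2]
      congr 1; funext z; ring_nf
      rw [integral_const_mul, hw.normalized, mul_one]
    have habs : |convw h w x - h x| ≤ ∫ z, |h (x - z) - h x| * w z := by
      rw [hdiff]
      calc |∫ z, (h (x - z) - h x) * w z| = ‖∫ z, (h (x - z) - h x) * w z‖ :=
            (Real.norm_eq_abs _).symm
        _ ≤ ∫ z, ‖(h (x - z) - h x) * w z‖ := norm_integral_le_integral_norm _
        _ = ∫ z, |h (x - z) - h x| * w z := by
            congr 1; funext z
            rw [Real.norm_eq_abs, abs_mul, abs_of_nonneg (hw.nonneg z)]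
    have hint3 : Integrable (fun z => |h (x - z) - h x| * w z) :=
      hw.integrable.bdd_mul (c := b - a)
        (((hmeas.comp (measurable_const.sub measurable_id)).sub measurable_const).abs.aestronglyMeasurable)
        (ae_of_all _ fun z => by
          rw [Real.norm_eq_abs, abs_abs, abs_sub_le_iff]
          constructor <;>
            linarith [(hab (x - z)).1, (hab (x - z)).2, (hab x).1, (hab x).2])
    calc ENNReal.ofReal |convw h w x - h x|
        ≤ ENNReal.ofReal (∫ z, |h (x - z) - h x| * w z) := ENNReal.ofReal_le_ofReal habs
      _ = ∫⁻ z, ENNReal.ofReal (|h (x - z) - h x| * w z) :=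
          ofReal_integral_eq_lintegral_ofReal hint3
            (ae_of_all _ fun z => mul_nonneg (abs_nonneg _) (hw.nonneg z))
  have hswapmeas : AEMeasurable
      (Function.uncurry fun x z => ENNReal.ofReal (|h (x - z) - h x| * w z))
      ((volume : Measure ℝ).prod volume) := by
    have h1 : Measurable fun p : ℝ × ℝ => |h (p.1 - p.2) - h p.1| :=
      ((hmeas.comp (measurable_fst.sub measurable_snd)).sub (hmeas.comp measurable_fst)).abs
    have h2 : AEMeasurable (fun p : ℝ × ℝ => w p.2) ((volume : Measure ℝ).prod volume) :=
      hw.integrable.aemeasurable.comp_quasiMeasurePreserving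
        Measure.quasiMeasurePreserving_snd
    exact (h1.aemeasurable.mul h2).ennreal_ofReal
  calc (∫⁻ x : ℝ, ENNReal.ofReal |convw h w x - h x|)
      ≤ ∫⁻ x, ∫⁻ z, ENNReal.ofReal (|h (x - z) - h x| * w z) := lintegral_mono step1
    _ = ∫⁻ z, ∫⁻ x, ENNReal.ofReal (|h (x - z) - h x| * w z) :=
        lintegral_lintegral_swap hswapmeas
    _ ≤ ∫⁻ z, ENNReal.ofReal (|z| * w z * (b - a)) := by
        refine lintegral_mono fun z => ?_
        calc (∫⁻ x, ENNReal.ofReal (|h (x - z) - h x| * w z))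
            = ∫⁻ x, ENNReal.ofReal |h (x - z) - h x| * ENNReal.ofReal (w z) := by
              simp_rw [ENNReal.ofReal_mul (abs_nonneg _)]
          _ = (∫⁻ x, ENNReal.ofReal |h (x - z) - h x|) * ENNReal.ofReal (w z) :=
              lintegral_mul_const'' _
                (((hmeas.comp (measurable_id.sub_const z)).sub hmeas).abs.ennreal_ofReal.aemeasurable)
          _ ≤ ENNReal.ofReal (|z| * (b - a)) * ENNReal.ofReal (w z) :=
              mul_le_mul_left (aux19_key_abs hm hab z) _
          _ = ENNReal.ofReal (|z| * w z * (b - a)) := by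
              rw [← ENNReal.ofReal_mul (mul_nonneg (abs_nonneg _) (by linarith))]
              congr 1; ring
    _ = ENNReal.ofReal (∫ z, |z| * w z * (b - a)) :=
        (ofReal_integral_eq_lintegral_ofReal (hCw.mul_const _)
          (ae_of_all _ fun z =>
            mul_nonneg (mul_nonneg (abs_nonneg _) (hw.nonneg z)) (by linarith))).symm
    _ = ENNReal.ofReal ((∫ x : ℝ, |x| * w x) * (b - a)) := by
        rw [integral_mul_const]


end
end
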